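/- arXiv:1409.8058 — 3 statements merged into one kernel-verified Lean document; each statement's English description precedes it below -/
import Mathlib

section
/- Under the standing assumptions, for every f ∈ 𝒳 the element (R̄ℬ f)(t) = ∫₀ᵗ T̄(t−s) B f(s) ds belongs to X for every t ∈ [0,t₀], and the map [0,t₀] → X, t ↦ (R̄ℬ f)(t), is continuous and vanishes at t = 0; hence R̄ℬ is a well-defined linear map from 𝒳 to 𝒳. -/
open Filter Topology Set MeasureTheory

namespace DS

section SemigroupDefs

variable {E : Type*} [AddCommGroup E] [Module ℝ E] [TopologicalSpace E]

/-- `I` is the Riemann integral of `g` over `[a,b]`, defined as the limit of the left Riemann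
sums over uniform partitions. -/
def IsRiemannIntegral (g : ℝ → E) (a b : ℝ) (I : E) : Prop :=
  Tendsto
    (fun n : ℕ => ((b - a) / (n : ℝ)) •
      ∑ k ∈ Finset.range n, g (a + (b - a) * (k : ℝ) / (n : ℝ)))
    atTop (𝓝 I)

/-- `(T t)_{t ≥ 0}` is a `C₀`-semigroup. -/
def IsC0Semigroup (T : ℝ → E →L[ℝ] E) : Prop :=
  T 0 = ContinuousLinearMap.id ℝ E ∧
    (∀ t s : ℝ, 0 ≤ t → 0 ≤ s → T (t + s) = (T t).comp (T s)) ∧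
    ∀ x : E, ContinuousOn (fun t : ℝ => T t x) (Ici (0 : ℝ))

/-- Local equicontinuity of a one-parameter family of operators. -/
def IsLocallyEquicontinuous (T : ℝ → E →L[ℝ] E) : Prop :=
  ∀ t₀ : ℝ, 0 < t₀ → ∀ p : Seminorm ℝ E, Continuous (fun x : E => p x) →
    ∃ q : Seminorm ℝ E, Continuous (fun x : E => q x) ∧
      ∃ M : ℝ, 0 ≤ M ∧ ∀ x : E, ∀ t ∈ Icc (0 : ℝ) t₀, p (T t x) ≤ M * q x

/-- `A`, with domain `domA`, is the infinitesimal generator of the semigroup `T`. -/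
def IsGenerator (T : ℝ → E →L[ℝ] E) (domA : Set E) (A : E → E) : Prop :=
  (∀ x : E, x ∈ domA ↔
      ∃ y : E, Tendsto (fun t : ℝ => t⁻¹ • (T t x - x)) (𝓝[>] 0) (𝓝 y)) ∧
    ∀ x ∈ domA, Tendsto (fun t : ℝ => t⁻¹ • (T t x - x)) (𝓝[>] 0) (𝓝 (A x))

/-- Derivative of a vector-valued function within a set, in a topological vector space. -/
def HasDerivWithinAtLC (f : ℝ → E) (y : E) (s : Set ℝ) (t : ℝ) : Prop :=
  Tendsto (fun u : ℝ => (u - t)⁻¹ • (f u - f t)) (𝓝[s \ {t}] t) (𝓝 y)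

/-- Membership in `𝒳 = { f ∈ C([0,t₀],E) : f 0 = 0 }`; functions are given on all of `ℝ`,
but only their restriction to `[0,t₀]` is relevant. -/
def MemXc (t₀ : ℝ) (f : ℝ → E) : Prop :=
  ContinuousOn f (Icc (0 : ℝ) t₀) ∧ f 0 = 0

/-- `f ∈ D(𝒟)` with `𝒟 f = f'`. -/
def MemDD (t₀ : ℝ) (f f' : ℝ → E) : Prop :=
  MemXc t₀ f ∧ (∀ t ∈ Icc (0 : ℝ) t₀, HasDerivWithinAtLC f (f' t) (Icc (0 : ℝ) t₀) t) ∧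
    ContinuousOn f' (Icc (0 : ℝ) t₀) ∧ f' 0 = 0

/-- `f ∈ D(𝒜)` for the operator `𝒜` induced on `𝒳` by `A` with domain `domA`. -/
def MemDA (t₀ : ℝ) (domA : Set E) (A : E → E) (f : ℝ → E) : Prop :=
  MemXc t₀ f ∧ (∀ t ∈ Icc (0 : ℝ) t₀, f t ∈ domA) ∧
    ContinuousOn (fun t : ℝ => A (f t)) (Icc (0 : ℝ) t₀)

end SemigroupDefs

/-- Sequential completeness of a uniform space. -/
def SeqComplete (E : Type*) [UniformSpace E] : Prop :=
  ∀ u : ℕ → E, CauchySeq u → ∃ x : E, Tendsto u atTop (𝓝 x)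

end DS

open DS

section RiemannBasic

variable {E F : Type*} [AddCommGroup E] [Module ℝ E] [TopologicalSpace E]
  [AddCommGroup F] [Module ℝ F] [TopologicalSpace F]

lemma sample_mem_Icc {a b : ℝ} (hab : a ≤ b) {n k : ℕ} (hk : k ≤ n) :
    a + (b - a) * (k : ℝ) / (n : ℝ) ∈ Icc a b := by
  rcases Nat.eq_zero_or_pos n with rfl | hn
  · simp [div_zero, hab]
  constructor
  · have : (0:ℝ) ≤ (b - a) * k / n :=
      div_nonneg (mul_nonneg (by linarith) (Nat.cast_nonneg k)) (Nat.cast_nonneg n)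
    linarith
  · have hn' : (0:ℝ) < n := by exact_mod_cast hn
    have hkn : (k:ℝ) ≤ n := by exact_mod_cast hk
    have : (b - a) * k / n ≤ (b - a) := by
      rw [div_le_iff₀ hn']
      nlinarith [sub_nonneg.mpr hab]
    linarith

lemma isRiemannIntegral_congr {g g' : ℝ → E} {a b : ℝ} {I : E} (hab : a ≤ b)
    (h : ∀ x ∈ Icc a b, g x = g' x) (hg : IsRiemannIntegral g a b I) :
    IsRiemannIntegral g' a b I := by
  unfold IsRiemannIntegral at hg ⊢
  convert hg using 2 with n
  refine congrArg _ (Finset.sum_congr rfl fun k hk => ?_)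
  exact (h _ (sample_mem_Icc hab (Finset.mem_range.mp hk).le)).symm

omit [TopologicalSpace E] in
lemma DS.IsRiemannIntegral.sub [TopologicalSpace E] [IsTopologicalAddGroup E] {g g' : ℝ → E} {a b : ℝ} {I I' : E}
    (hg : IsRiemannIntegral g a b I) (hg' : IsRiemannIntegral g' a b I') :
    IsRiemannIntegral (fun x => g x - g' x) a b (I - I') := by
  unfold IsRiemannIntegral at *
  have := hg.sub hg'
  convert this using 2 with n
  rw [Finset.sum_sub_distrib, smul_sub]

lemma isRiemannIntegral_zero_of_eqOn {g : ℝ → E} {a b : ℝ} (hab : a ≤ b)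
    (h : ∀ x ∈ Icc a b, g x = 0) : IsRiemannIntegral g a b 0 := by
  have : (fun n : ℕ => ((b - a) / (n : ℝ)) •
      ∑ k ∈ Finset.range n, g (a + (b - a) * (k : ℝ) / (n : ℝ)))
      = fun _ : ℕ => (0 : E) := by
    funext n
    rw [Finset.sum_congr rfl fun k hk =>
      h _ (sample_mem_Icc hab (Finset.mem_range.mp hk).le)]
    simp
  rw [IsRiemannIntegral, this]
  exact tendsto_const_nhds

lemma DS.IsRiemannIntegral.map {g : ℝ → E} {a b : ℝ} {I : E}
    (hg : IsRiemannIntegral g a b I) (φ : E →L[ℝ] F) :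
    IsRiemannIntegral (fun x => φ (g x)) a b (φ I) := by
  unfold IsRiemannIntegral at *
  have := (φ.continuous.tendsto I).comp hg
  convert this using 2 with n
  simp [Function.comp, φ.map_smul, map_sum]

lemma DS.IsRiemannIntegral.unique [T2Space E] {g : ℝ → E} {a b : ℝ} {I I' : E}
    (hg : IsRiemannIntegral g a b I) (hg' : IsRiemannIntegral g a b I') : I = I' :=
  tendsto_nhds_unique hg hg'

lemma seminorm_sum_le {α : Type*} (p : Seminorm ℝ E) (s : Finset α) (f : α → E) :
    p (∑ i ∈ s, f i) ≤ ∑ i ∈ s, p (f i) := by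
  classical
  induction s using Finset.cons_induction with
  | empty => simp
  | cons a s ha ih =>
      rw [Finset.sum_cons, Finset.sum_cons]
      exact le_trans (map_add_le_add p _ _) (by linarith)

lemma seminorm_sub_rev (p : Seminorm ℝ E) (x y : E) : p (x - y) = p (y - x) := by
  rw [← neg_sub, map_neg_eq_map]

end RiemannBasic
section ScalarRiemann

lemma isRiemannIntegral_aux {g : ℝ → ℝ} {a b : ℝ} (hab : a < b)
    (hg : ContinuousOn g (Icc a b)) :
    Tendsto (fun n : ℕ => ((b - a) / (n : ℝ)) •
      ∑ k ∈ Finset.range n, g (a + (b - a) * (k : ℝ) / (n : ℝ)))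
      atTop (𝓝 (∫ x in a..b, g x)) := by
  rw [Metric.tendsto_atTop]
  intro ε hε
  set ε' := ε / (2 * (b - a)) with hε'def
  have hε' : 0 < ε' := div_pos hε (by linarith)
  obtain ⟨δ, hδ, hmod⟩ := Metric.uniformContinuousOn_iff.mp
    (isCompact_Icc.uniformContinuousOn_of_continuous hg) ε' hε'
  obtain ⟨N₀, hN₀⟩ := exists_nat_ge (2 * (b - a) / δ)
  refine ⟨max N₀ 1, fun n hn => ?_⟩
  have hn1 : 1 ≤ n := le_trans (le_max_right _ _) hn
  have hnpos : (0 : ℝ) < n := by exact_mod_cast hn1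
  have hmesh : (b - a) / n ≤ δ / 2 := by
    have h2 : (N₀ : ℝ) ≤ n := by exact_mod_cast le_trans (le_max_left _ _) hn
    have h3 : 2 * (b - a) ≤ n * δ := by
      have := (div_le_iff₀ hδ).mp (hN₀.trans h2)
      linarith
    rw [div_le_div_iff₀ hnpos (by norm_num : (0:ℝ) < 2)]
    linarith
  set x : ℕ → ℝ := fun k => a + (b - a) * (k : ℝ) / (n : ℝ) with hxdef
  have hstep : ∀ k : ℕ, x (k + 1) - x k = (b - a) / n := by
    intro k
    simp only [hxdef]
    push_cast
    field_simp
    ring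
  have hmono : ∀ k : ℕ, x k ≤ x (k + 1) := by
    intro k
    have h2 : (0:ℝ) ≤ x (k + 1) - x k := by
      rw [hstep k]; exact div_nonneg (by linarith) hnpos.le
    exact sub_nonneg.mp h2
  have hmem : ∀ k ≤ n, x k ∈ Icc a b := fun k hk => by
    have h0 : (0:ℝ) ≤ (b - a) * k / n :=
      div_nonneg (mul_nonneg (by linarith) (Nat.cast_nonneg k)) hnpos.le
    have hkn : (k : ℝ) ≤ n := by exact_mod_cast hk
    have h1 : (b - a) * k / n ≤ b - a := by
      rw [div_le_iff₀ hnpos]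
      nlinarith
    exact ⟨by simp only [hxdef]; linarith, by simp only [hxdef]; linarith⟩
  have hsub : ∀ k < n, Icc (x k) (x (k + 1)) ⊆ Icc a b := fun k hk =>
    Icc_subset_Icc (hmem k hk.le).1 (hmem (k + 1) hk).2
  have hint : ∀ k < n, IntervalIntegrable g MeasureTheory.volume (x k) (x (k + 1)) := by
    intro k hk
    apply ContinuousOn.intervalIntegrable
    rw [uIcc_of_le (hmono k)]
    exact hg.mono (hsub k hk)
  have hsplit : (∫ t in a..b, g t) = ∑ k ∈ Finset.range n, ∫ t in x k..x (k + 1), g t := by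
    have h := intervalIntegral.sum_integral_adjacent_intervals hint
    have hx0 : x 0 = a := by simp [hxdef]
    have hxn : x n = b := by
      simp only [hxdef]
      field_simp
      ring
    rw [hx0, hxn] at h
    exact h.symm
  have hterm : ∀ k ∈ Finset.range n,
      (∫ t in x k..x (k + 1), (g (x k) - g t))
        = (b - a) / n * g (x k) - ∫ t in x k..x (k + 1), g t := by
    intro k hk
    rw [intervalIntegral.integral_sub intervalIntegrable_const
      (hint k (Finset.mem_range.mp hk)), intervalIntegral.integral_const, hstep k, smul_eq_mul]
  have hSsum : ((b - a) / (n : ℝ)) • ∑ k ∈ Finset.range n, g (x k)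
      = ∑ k ∈ Finset.range n, (b - a) / n * g (x k) := by
    rw [smul_eq_mul, Finset.mul_sum]
  have hdiff : ((b - a) / (n : ℝ)) • (∑ k ∈ Finset.range n, g (x k)) - (∫ t in a..b, g t)
      = ∑ k ∈ Finset.range n, ∫ t in x k..x (k + 1), (g (x k) - g t) := by
    rw [hSsum, hsplit, ← Finset.sum_sub_distrib]
    exact (Finset.sum_congr rfl hterm).symm
  have hbound : ∀ k ∈ Finset.range n,
      |∫ t in x k..x (k + 1), (g (x k) - g t)| ≤ ε' * ((b - a) / n) := by
    intro k hk
    have hk' := Finset.mem_range.mp hk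
    have h1 : ∀ t ∈ Set.uIoc (x k) (x (k + 1)), ‖g (x k) - g t‖ ≤ ε' := by
      intro t ht
      rw [uIoc_of_le (hmono k)] at ht
      have htmem : t ∈ Icc a b := hsub k hk' ⟨ht.1.le, ht.2⟩
      have hxkmem : x k ∈ Icc a b := hmem k hk'.le
      have hdist : dist (x k) t < δ := by
        rw [Real.dist_eq, abs_sub_comm, abs_of_nonneg (sub_nonneg.mpr ht.1.le)]
        have h2 : t - x k ≤ (b - a) / n :=
          (sub_le_sub_right ht.2 (x k)).trans_eq (hstep k)
        exact lt_of_le_of_lt (h2.trans hmesh) (by linarith)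
      have := hmod (x k) hxkmem t htmem hdist
      rw [Real.dist_eq] at this
      exact le_of_lt this
    have := intervalIntegral.norm_integral_le_of_norm_le_const h1
    rw [Real.norm_eq_abs] at this
    calc |∫ t in x k..x (k + 1), (g (x k) - g t)| ≤ ε' * |x (k + 1) - x k| := this
      _ = ε' * ((b - a) / n) := by
          rw [hstep k, abs_of_nonneg (div_nonneg (by linarith) hnpos.le)]
  rw [Real.dist_eq, hdiff]
  calc |∑ k ∈ Finset.range n, ∫ t in x k..x (k + 1), (g (x k) - g t)|
      ≤ ∑ k ∈ Finset.range n, |∫ t in x k..x (k + 1), (g (x k) - g t)| :=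
        Finset.abs_sum_le_sum_abs _ _
    _ ≤ ∑ _k ∈ Finset.range n, ε' * ((b - a) / n) := Finset.sum_le_sum hbound
    _ = n * (ε' * ((b - a) / n)) := by rw [Finset.sum_const, Finset.card_range, nsmul_eq_mul]
    _ = ε' * (b - a) := by field_simp
    _ = ε / 2 := by
        rw [hε'def, div_mul_eq_mul_div,
          div_eq_div_iff (by linarith : (0:ℝ) < 2 * (b - a)).ne' (by norm_num : (2:ℝ) ≠ 0)]
        ring
    _ < ε := by linarith

lemma isRiemannIntegral_intervalIntegral {g : ℝ → ℝ} {a b : ℝ} (hab : a ≤ b)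
    (hg : ContinuousOn g (Icc a b)) :
    Tendsto (fun n : ℕ => ((b - a) / (n : ℝ)) •
      ∑ k ∈ Finset.range n, g (a + (b - a) * (k : ℝ) / (n : ℝ)))
      atTop (𝓝 (∫ x in a..b, g x)) := by
  rcases eq_or_lt_of_le hab with rfl | hlt
  · have heq : (fun n : ℕ => ((a - a) / (n : ℝ)) •
        ∑ k ∈ Finset.range n, g (a + (a - a) * (k : ℝ) / (n : ℝ))) = fun _ : ℕ => (0:ℝ) := by
      funext n; simp
    rw [heq, intervalIntegral.integral_same]
    exact tendsto_const_nhds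
  · exact isRiemannIntegral_aux hlt hg

end ScalarRiemann

section VectorRiemann
open scoped Uniformity

lemma sum_range_mul_eq {M : Type*} [AddCommMonoid M] (F : ℕ → M) (n m : ℕ) :
    ∑ j ∈ Finset.range (n * m), F j
      = ∑ k ∈ Finset.range n, ∑ r ∈ Finset.range m, F (k * m + r) := by
  induction n with
  | zero => simp
  | succ n ih =>
      rw [Nat.succ_mul, Finset.sum_range_add, ih, Finset.sum_range_succ]

lemma sample_mem_Icc' {a b : ℝ} (hab : a ≤ b) {n k : ℕ} (hk : k ≤ n) :
    a + (b - a) * (k : ℝ) / (n : ℝ) ∈ Icc a b := by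
  rcases Nat.eq_zero_or_pos n with rfl | hn
  · simp [div_zero, hab]
  constructor
  · have : (0:ℝ) ≤ (b - a) * k / n :=
      div_nonneg (mul_nonneg (by linarith) (Nat.cast_nonneg k)) (Nat.cast_nonneg n)
    linarith
  · have hn' : (0:ℝ) < n := by exact_mod_cast hn
    have hkn : (k:ℝ) ≤ n := by exact_mod_cast hk
    have : (b - a) * k / n ≤ (b - a) := by
      rw [div_le_iff₀ hn']
      nlinarith [sub_nonneg.mpr hab]
    linarith

lemma seminorm_sum_le' {E : Type*} [AddCommGroup E] [Module ℝ E] {α : Type*}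
    (p : Seminorm ℝ E) (s : Finset α) (f : α → E) :
    p (∑ i ∈ s, f i) ≤ ∑ i ∈ s, p (f i) := by
  classical
  induction s using Finset.cons_induction with
  | empty => simp
  | cons a s ha ih =>
      rw [Finset.sum_cons, Finset.sum_cons]
      exact le_trans (map_add_le_add p _ _) (by linarith)

lemma seminorm_sub_rev' {E : Type*} [AddCommGroup E] [Module ℝ E]
    (p : Seminorm ℝ E) (x y : E) : p (x - y) = p (y - x) := by
  rw [← neg_sub, map_neg_eq_map]

variable {E : Type*} [AddCommGroup E] [Module ℝ E] [UniformSpace E] [IsUniformAddGroup E]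
  [ContinuousSMul ℝ E]

lemma seminorm_uniform_mod (p : Seminorm ℝ E)
    (hp : ∀ ε : ℝ, 0 < ε → {z : E | p z < ε} ∈ 𝓝 (0 : E))
    {h : ℝ → E} {a b : ℝ} (hh : ContinuousOn h (Icc a b)) {ε : ℝ} (hε : 0 < ε) :
    ∃ δ : ℝ, 0 < δ ∧ ∀ s ∈ Icc a b, ∀ t ∈ Icc a b, |s - t| ≤ δ → p (h s - h t) < ε := by
  have huc := isCompact_Icc.uniformContinuousOn_of_continuous hh
  have hV : {q : E × E | p (q.2 - q.1) < ε} ∈ 𝓤 E := by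
    rw [uniformity_eq_comap_nhds_zero E]
    exact Filter.preimage_mem_comap (hp ε hε)
  have hpre := huc hV
  rw [Filter.mem_map, Filter.mem_inf_iff_superset] at hpre
  obtain ⟨U, hU, Sset, hS, hsub⟩ := hpre
  obtain ⟨δ, hδ, hδU⟩ := Metric.mem_uniformity_dist.mp hU
  refine ⟨δ / 2, by linarith, fun s hs t ht hst => ?_⟩
  have h1 : ((t, s) : ℝ × ℝ) ∈ U := by
    apply hδU
    rw [Real.dist_eq, abs_sub_comm]
    exact lt_of_le_of_lt hst (by linarith)
  have h2 : ((t, s) : ℝ × ℝ) ∈ Sset := mem_of_mem_of_subset (mk_mem_prod ht hs) hS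
  exact hsub ⟨h1, h2⟩

lemma exists_isRiemannIntegral {κ : Type*} [Nonempty κ] {Q : SeminormFamily ℝ E κ} (hQ : WithSeminorms Q)
    (hsc : SeqComplete E) {h : ℝ → E} {a b : ℝ} (hab : a ≤ b)
    (hh : ContinuousOn h (Icc a b)) : ∃ I : E, IsRiemannIntegral h a b I := by
  set S : ℕ → E := fun n => ((b - a) / (n : ℝ)) •
      ∑ k ∈ Finset.range n, h (a + (b - a) * (k : ℝ) / (n : ℝ)) with hSdef
  rcases eq_or_lt_of_le hab with rfl | hlt
  · refine ⟨0, ?_⟩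
    have hz : S = fun _ : ℕ => (0 : E) := by funext n; simp [hSdef]
    show Tendsto S atTop (𝓝 0)
    rw [hz]
    exact tendsto_const_nhds
  suffices hcs : CauchySeq S by
    obtain ⟨I, hI⟩ := hsc S hcs
    exact ⟨I, hI⟩
  rw [cauchySeq_iff]
  intro V hV
  rw [uniformity_eq_comap_nhds_zero E] at hV
  obtain ⟨W, hW, hWV⟩ := hV
  rcases hQ.hasBasis.mem_iff.mp hW with ⟨U, hU, hUW⟩
  rcases Q.basisSets_iff.mp hU with ⟨F, r, hr, rfl⟩
  set P := F.sup Q with hPdef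
  set ε := r / (2 * (b - a) + 1) with hεdef
  have hε : 0 < ε := div_pos hr (by linarith)
  have hballs : ∀ ε' : ℝ, 0 < ε' → {z : E | P z < ε'} ∈ 𝓝 (0 : E) := by
    intro ε' hε'
    have hset : {z : E | P z < ε'} = P.ball 0 ε' := by
      ext z; simp [Seminorm.mem_ball_zero]
    rw [hset]
    exact hQ.hasBasis.mem_of_mem (Q.basisSets_mem F hε')
  obtain ⟨δ, hδ, hmod⟩ := seminorm_uniform_mod P hballs hh hε
  obtain ⟨N₀, hN₀⟩ := exists_nat_ge ((b - a) / δ)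
  have key : ∀ n : ℕ, max N₀ 1 ≤ n → ∀ m : ℕ, 1 ≤ m → P (S n - S (n * m)) ≤ (b - a) * ε := by
    intro n hn m hm
    have hn1 : 1 ≤ n := le_trans (le_max_right _ _) hn
    have hnpos : (0:ℝ) < n := by exact_mod_cast hn1
    have hmpos : (0:ℝ) < m := by exact_mod_cast hm
    have hprod : (0:ℝ) < (n : ℝ) * m := mul_pos hnpos hmpos
    have hmesh : (b - a) / n ≤ δ := by
      have h2 : (N₀ : ℝ) ≤ n := by exact_mod_cast le_trans (le_max_left _ _) hn
      have h3 : b - a ≤ n * δ := by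
        have := (div_le_iff₀ hδ).mp (hN₀.trans h2)
        linarith
      rw [div_le_iff₀ hnpos]
      linarith
    have hcast : ((n * m : ℕ) : ℝ) = (n : ℝ) * m := by push_cast; ring
    set c : ℝ := (b - a) / ((n : ℝ) * m) with hcdef
    have hc0 : 0 ≤ c := div_nonneg (by linarith) hprod.le
    set x : ℕ → ℝ := fun k => a + (b - a) * (k : ℝ) / (n : ℝ) with hxdef
    set y : ℕ → ℝ := fun j => a + (b - a) * (j : ℝ) / ((n : ℝ) * m) with hydef
    have hscal : (b - a) / (n : ℝ) = c * m := by
      rw [hcdef, div_mul_eq_mul_div, div_eq_div_iff hnpos.ne' hprod.ne']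
      ring
    have hSn : S n = c • ∑ k ∈ Finset.range n, ∑ _r ∈ Finset.range m, h (x k) := by
      calc S n = ((b - a) / (n : ℝ)) • ∑ k ∈ Finset.range n, h (x k) := rfl
        _ = (c * m) • ∑ k ∈ Finset.range n, h (x k) := by rw [hscal]
        _ = c • ((m : ℝ) • ∑ k ∈ Finset.range n, h (x k)) := by rw [smul_smul]
        _ = c • ∑ k ∈ Finset.range n, (m : ℝ) • h (x k) := by rw [Finset.smul_sum]
        _ = c • ∑ k ∈ Finset.range n, ∑ _r ∈ Finset.range m, h (x k) := by
            simp [Finset.sum_const, Finset.card_range, Nat.cast_smul_eq_nsmul]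
    have hSnm : S (n * m) = c • ∑ k ∈ Finset.range n, ∑ r ∈ Finset.range m, h (y (k * m + r)) := by
      show ((b - a) / ((n * m : ℕ) : ℝ)) •
          ∑ j ∈ Finset.range (n * m), h (a + (b - a) * (j : ℝ) / ((n * m : ℕ) : ℝ))
        = c • ∑ k ∈ Finset.range n, ∑ r ∈ Finset.range m, h (y (k * m + r))
      rw [sum_range_mul_eq (fun j => h (a + (b - a) * (j : ℝ) / ((n * m : ℕ) : ℝ))) n m]
      simp only [hcast, hydef, hcdef]
    have hdiffS : S n - S (n * m)
        = c • ∑ k ∈ Finset.range n, ∑ r ∈ Finset.range m, (h (x k) - h (y (k * m + r))) := by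
      rw [hSn, hSnm, ← smul_sub, ← Finset.sum_sub_distrib]
      congr 1
      refine Finset.sum_congr rfl fun k _ => ?_
      rw [← Finset.sum_sub_distrib]
    have hterm : ∀ k ∈ Finset.range n, ∀ r ∈ Finset.range m,
        P (h (x k) - h (y (k * m + r))) ≤ ε := by
      intro k hk r hr'
      have hkn := Finset.mem_range.mp hk
      have hrm := Finset.mem_range.mp hr'
      have hjlt : k * m + r < n * m := by
        calc k * m + r < k * m + m := by omega
          _ = (k + 1) * m := by ring
          _ ≤ n * m := Nat.mul_le_mul_right m (by omega)
      have hjle : k * m + r ≤ n * m := hjlt.le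
      have hxmem : x k ∈ Icc a b := sample_mem_Icc' hab hkn.le
      have hymem : y (k * m + r) ∈ Icc a b := by
        have := sample_mem_Icc' hab (n := n * m) (k := k * m + r) hjle
        rwa [hcast] at this
      have hdiff_eq : y (k * m + r) - x k = (b - a) * r / ((n : ℝ) * m) := by
        simp only [hydef, hxdef]
        push_cast
        field_simp
        ring
      have hd0 : 0 ≤ y (k * m + r) - x k := by
        rw [hdiff_eq]
        exact div_nonneg (mul_nonneg (by linarith) (Nat.cast_nonneg r)) hprod.le
      have hdle : y (k * m + r) - x k ≤ δ := by
        rw [hdiff_eq]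
        have hrm' : (r : ℝ) ≤ m := by exact_mod_cast hrm.le
        have h1 : (b - a) * r / ((n : ℝ) * m) ≤ (b - a) * m / ((n : ℝ) * m) := by
          apply div_le_div_of_nonneg_right ?_ hprod.le
          exact mul_le_mul_of_nonneg_left hrm' (by linarith)
        have h2 : (b - a) * m / ((n : ℝ) * m) = (b - a) / n := by
          rw [div_eq_div_iff hprod.ne' hnpos.ne']
          ring
        calc (b - a) * r / ((n : ℝ) * m) ≤ (b - a) * m / ((n : ℝ) * m) := h1
          _ = (b - a) / n := h2
          _ ≤ δ := hmesh
      have habs : |x k - y (k * m + r)| ≤ δ := by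
        rw [abs_sub_comm, abs_of_nonneg hd0]
        exact hdle
      exact (hmod (x k) hxmem (y (k * m + r)) hymem habs).le
    calc P (S n - S (n * m))
        = ‖c‖ * P (∑ k ∈ Finset.range n, ∑ r ∈ Finset.range m,
            (h (x k) - h (y (k * m + r)))) := by rw [hdiffS, map_smul_eq_mul]
      _ ≤ c * ∑ k ∈ Finset.range n, ∑ r ∈ Finset.range m, P (h (x k) - h (y (k * m + r))) := by
          rw [Real.norm_eq_abs, abs_of_nonneg hc0]
          refine mul_le_mul_of_nonneg_left ?_ hc0
          refine le_trans (seminorm_sum_le' P _ _) (Finset.sum_le_sum fun k hk => ?_)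
          exact seminorm_sum_le' P _ _
      _ ≤ c * ∑ _k ∈ Finset.range n, ∑ _r ∈ Finset.range m, ε := by
          refine mul_le_mul_of_nonneg_left ?_ hc0
          refine Finset.sum_le_sum fun k hk => Finset.sum_le_sum fun r hr' => hterm k hk r hr'
      _ = c * ((n : ℝ) * m * ε) := by
          simp only [Finset.sum_const, Finset.card_range, nsmul_eq_mul]
          ring
      _ = (b - a) * ε := by
          rw [hcdef]
          field_simp
  refine ⟨max N₀ 1, fun k hk l hl => ?_⟩
  apply hWV
  have hk1 : 1 ≤ k := le_trans (le_max_right _ _) hk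
  have hl1 : 1 ≤ l := le_trans (le_max_right _ _) hl
  have h1 := key l hl k hk1
  have h2 := key k hk l hl1
  have hsplit : S l - S k = (S l - S (l * k)) + (S (l * k) - S k) := by abel
  have h3 : P (S (l * k) - S k) ≤ (b - a) * ε := by
    rw [seminorm_sub_rev', mul_comm l k]
    exact h2
  have h4 : P (S l - S k) < r := by
    have h5 : P (S l - S k) ≤ P (S l - S (l * k)) + P (S (l * k) - S k) := by
      rw [hsplit]; exact map_add_le_add P _ _
    have h6 : 2 * (b - a) * ε < r := by
      rw [hεdef, ← mul_div_assoc,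
        div_lt_iff₀ (by linarith : (0:ℝ) < 2 * (b - a) + 1)]
      nlinarith
    linarith
  have : S l - S k ∈ P.ball 0 r := by rwa [Seminorm.mem_ball_zero]
  exact hUW this

end VectorRiemann

section Integrand

lemma integrand_continuousOn
    {X Xb : Type*} [AddCommGroup X] [Module ℝ X] [UniformSpace X] [IsUniformAddGroup X]
    [ContinuousSMul ℝ X]
    [AddCommGroup Xb] [Module ℝ Xb] [UniformSpace Xb] [IsUniformAddGroup Xb]
    [ContinuousSMul ℝ Xb]
    {κ : Type*} [Nonempty κ] {Q : SeminormFamily ℝ Xb κ} (hQ : WithSeminorms Q)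
    (Tb : ℝ → Xb →L[ℝ] Xb)
    (hTbc : ∀ y : Xb, ContinuousOn (fun t : ℝ => Tb t y) (Ici (0 : ℝ)))
    (hTbloc : IsLocallyEquicontinuous Tb)
    (B : X →L[ℝ] Xb) {t₀ : ℝ} (ht₀ : 0 < t₀)
    {c : ℝ} (hct : c ≤ t₀)
    {w : ℝ → X} (hw : ContinuousOn w (Icc 0 c)) :
    ContinuousOn (fun s : ℝ => Tb (c - s) (B (w s))) (Icc (0 : ℝ) c) := by
  intro s₀ hs₀
  have hmem : ∀ s ∈ Icc (0 : ℝ) c, c - s ∈ Icc (0 : ℝ) t₀ := fun s hs =>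
    ⟨by linarith [hs.2], by linarith [hs.1]⟩
  have hterm2 : Tendsto (fun s : ℝ => Tb (c - s) (B (w s₀))) (𝓝[Icc (0 : ℝ) c] s₀)
      (𝓝 (Tb (c - s₀) (B (w s₀)))) := by
    have hcont : ContinuousOn (fun s : ℝ => Tb (c - s) (B (w s₀))) (Icc (0 : ℝ) c) := by
      apply (hTbc (B (w s₀))).comp (continuous_const.sub continuous_id).continuousOn
      intro s hs
      exact (hmem s hs).1
    exact hcont s₀ hs₀
  have hterm1 : Tendsto (fun s : ℝ => Tb (c - s) (B (w s) - B (w s₀)))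
      (𝓝[Icc (0 : ℝ) c] s₀) (𝓝 0) := by
    rw [hQ.tendsto_nhds]
    intro i ε hε
    obtain ⟨q, hqc, M, hM, hbound⟩ := hTbloc t₀ ht₀ (Q i) (hQ.continuous_seminorm i)
    have hsub : Tendsto (fun s : ℝ => B (w s) - B (w s₀)) (𝓝[Icc (0 : ℝ) c] s₀) (𝓝 0) := by
      have h1 : Tendsto (fun s : ℝ => B (w s) - B (w s₀)) (𝓝[Icc (0 : ℝ) c] s₀)
          (𝓝 (B (w s₀) - B (w s₀))) :=
        ((B.continuous.comp_continuousOn hw).sub continuousOn_const) s₀ hs₀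
      rwa [sub_self] at h1
    have hq0 : Tendsto (fun s : ℝ => q (B (w s) - B (w s₀))) (𝓝[Icc (0 : ℝ) c] s₀) (𝓝 0) := by
      have h2 := (hqc.tendsto (0 : Xb)).comp hsub
      rw [map_zero] at h2
      exact h2
    have hsmall : ∀ᶠ s in 𝓝[Icc (0 : ℝ) c] s₀, q (B (w s) - B (w s₀)) < ε / (M + 1) :=
      hq0 (Iio_mem_nhds (by positivity))
    filter_upwards [hsmall, self_mem_nhdsWithin] with s hs hsIcc
    have hb := hbound (B (w s) - B (w s₀)) (c - s) (hmem s hsIcc)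
    have h3 : M * q (B (w s) - B (w s₀)) ≤ M * (ε / (M + 1)) :=
      mul_le_mul_of_nonneg_left hs.le hM
    have h4 : M * (ε / (M + 1)) < ε := by
      rw [← mul_div_assoc, div_lt_iff₀ (by linarith : (0:ℝ) < M + 1)]
      nlinarith
    rw [sub_zero]
    linarith
  have heq : (fun s : ℝ => Tb (c - s) (B (w s)))
      = fun s : ℝ => Tb (c - s) (B (w s) - B (w s₀)) + Tb (c - s) (B (w s₀)) := by
    funext s
    rw [map_sub, sub_add_cancel]
  show Tendsto (fun s : ℝ => Tb (c - s) (B (w s))) (𝓝[Icc (0 : ℝ) c] s₀)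
    (𝓝 (Tb (c - s₀) (B (w s₀))))
  rw [heq]
  have := hterm1.add hterm2
  rwa [zero_add] at this

end Integrand



set_option maxHeartbeats 2000000 in
/-- Under the standing assumptions of the Desch–Schappacher theorem, for every `f ∈ 𝒳`
the element `(R̄ℬ f)(t) = ∫₀ᵗ T̄(t-s) B f(s) ds` belongs to `X` for every `t ∈ [0,t₀]`,
and the resulting map `t ↦ (R̄ℬ f)(t)` is continuous on `[0,t₀]` and vanishes at `t = 0`;
hence `R̄ℬ` is a well-defined map from `𝒳` into `𝒳`. -/
theorem RB_well_defined
    {X Xb : Type*} {ι : Type*} [Nonempty ι]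
    [AddCommGroup X] [Module ℝ X] [UniformSpace X] [IsUniformAddGroup X]
    [ContinuousSMul ℝ X] [T2Space X]
    [AddCommGroup Xb] [Module ℝ Xb] [UniformSpace Xb] [IsUniformAddGroup Xb]
    [ContinuousSMul ℝ Xb] [T2Space Xb] [LocallyConvexSpace ℝ Xb]
    (hXsc : SeqComplete X) (hXbsc : SeqComplete Xb)
    (Γ : SeminormFamily ℝ X ι) (hΓ : WithSeminorms Γ)
    (T : ℝ → X →L[ℝ] X) (hT : IsC0Semigroup T) (hTloc : IsLocallyEquicontinuous T)
    (domA : Set X) (A : X → X) (hA : IsGenerator T domA A)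
    (e : X →L[ℝ] Xb) (he : Function.Injective e) (hedense : DenseRange e)
    (Tb : ℝ → Xb →L[ℝ] Xb) (hTb : IsC0Semigroup Tb) (hTbloc : IsLocallyEquicontinuous Tb)
    (Ab : Xb → Xb) (hAb : IsGenerator Tb (Set.range e) Ab)
    (hTbe : ∀ t : ℝ, 0 ≤ t → ∀ x : X, Tb t (e x) = e (T t x))
    (B : X →L[ℝ] Xb)
    (t₀ : ℝ) (ht₀ : 0 < t₀)
    -- condition (c): the integral `∫₀^{t₀} T̄(t₀ - t) B f(t) dt` belongs to `X`
    (hc : ∀ f : ℝ → X, ContinuousOn f (Icc (0 : ℝ) t₀) →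
      ∃ x : X, IsRiemannIntegral (fun t : ℝ => Tb (t₀ - t) (B (f t))) 0 t₀ (e x))
    -- condition (d): `p(∫₀^{t₀} T̄(t₀ - t) B f(t) dt) ≤ K · sup_{t ∈ [0,t₀]} p(f t)`
    (hd : ∀ i : ι, ∃ K : ℝ, K ∈ Ioo (0 : ℝ) 1 ∧
      ∀ f : ℝ → X, ContinuousOn f (Icc (0 : ℝ) t₀) → ∀ x : X,
        IsRiemannIntegral (fun t : ℝ => Tb (t₀ - t) (B (f t))) 0 t₀ (e x) →
          Γ i x ≤ K * ⨆ t ∈ Icc (0 : ℝ) t₀, Γ i (f t))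
    :
    ∀ f : ℝ → X, MemXc t₀ f → ∃ g : ℝ → X, MemXc t₀ g ∧
      ∀ t ∈ Icc (0 : ℝ) t₀,
        IsRiemannIntegral (fun s : ℝ => Tb (t - s) (B (f s))) 0 t (e (g t)) := by
  intro f hf
  obtain ⟨hfc, hf0⟩ := hf
  have ht₀0 : (0 : ℝ) ≤ t₀ := ht₀.le
  have hQ : WithSeminorms (gaugeSeminormFamily ℝ Xb) := with_gaugeSeminormFamily
  set φ : ℝ → ℝ → X := fun t s => f (max (s + t - t₀) 0) with hφdef
  have hφcont : ∀ t : ℝ, t ≤ t₀ → ContinuousOn (φ t) (Icc (0 : ℝ) t₀) := by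
    intro t ht
    apply hfc.comp (Continuous.continuousOn (by continuity))
    intro s hs
    exact ⟨le_max_right _ _, max_le (by linarith [hs.2]) ht₀0⟩
  have hgex : ∀ t : ℝ, ∃ x : X, IsRiemannIntegral
      (fun s : ℝ => Tb (t₀ - s) (B (φ (min t t₀) s))) 0 t₀ (e x) :=
    fun t => hc (φ (min t t₀)) (hφcont _ (min_le_right _ _))
  choose g hg using hgex
  have hmin : ∀ t ∈ Icc (0 : ℝ) t₀, min t t₀ = t := fun t ht => min_eq_left ht.2
  -- main claim: the Riemann integral over [0, t] equals e (g t)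
  have hmain : ∀ t ∈ Icc (0 : ℝ) t₀,
      IsRiemannIntegral (fun s : ℝ => Tb (t - s) (B (f s))) 0 t (e (g t)) := by
    intro t ht
    have hfc' : ContinuousOn f (Icc (0 : ℝ) t) := hfc.mono (Icc_subset_Icc le_rfl ht.2)
    have hucont : ContinuousOn (fun s : ℝ => Tb (t - s) (B (f s))) (Icc (0 : ℝ) t) :=
      integrand_continuousOn hQ Tb hTb.2.2 hTbloc B ht₀ ht.2 hfc'
    obtain ⟨I, hI⟩ := exists_isRiemannIntegral hQ hXbsc ht.1 hucont
    have hvcont : ContinuousOn (fun s : ℝ => Tb (t₀ - s) (B (φ t s))) (Icc (0 : ℝ) t₀) :=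
      integrand_continuousOn hQ Tb hTb.2.2 hTbloc B ht₀ le_rfl (hφcont t ht.2)
    have hgt := hg t
    rw [hmin t ht] at hgt
    have hIeq : I = e (g t) := by
      by_contra hne
      obtain ⟨ψ, hψ⟩ := geometric_hahn_banach_point_point hne
      have hψI : ψ I = ∫ s in (0:ℝ)..t, ψ (Tb (t - s) (B (f s))) :=
        tendsto_nhds_unique (hI.map ψ)
          (isRiemannIntegral_intervalIntegral ht.1 (ψ.continuous.comp_continuousOn hucont))
      have hψg : ψ (e (g t)) = ∫ s in (0:ℝ)..t₀, ψ (Tb (t₀ - s) (B (φ t s))) :=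
        tendsto_nhds_unique (hgt.map ψ)
          (isRiemannIntegral_intervalIntegral ht₀0 (ψ.continuous.comp_continuousOn hvcont))
      set c : ℝ := t₀ - t with hcdef
      have hc0 : (0 : ℝ) ≤ c := by rw [hcdef]; linarith [ht.2]
      have hct : c ≤ t₀ := by rw [hcdef]; linarith [ht.1]
      have hψvcont : ContinuousOn (fun s : ℝ => ψ (Tb (t₀ - s) (B (φ t s)))) (Icc (0 : ℝ) t₀) :=
        ψ.continuous.comp_continuousOn hvcont
      have hint1 : IntervalIntegrable (fun s : ℝ => ψ (Tb (t₀ - s) (B (φ t s))))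
          MeasureTheory.volume 0 c := by
        apply ContinuousOn.intervalIntegrable
        rw [uIcc_of_le hc0]
        exact hψvcont.mono (Icc_subset_Icc le_rfl hct)
      have hint2 : IntervalIntegrable (fun s : ℝ => ψ (Tb (t₀ - s) (B (φ t s))))
          MeasureTheory.volume c t₀ := by
        apply ContinuousOn.intervalIntegrable
        rw [uIcc_of_le hct]
        exact hψvcont.mono (Icc_subset_Icc hc0 le_rfl)
      have hsplit : (∫ s in (0:ℝ)..t₀, ψ (Tb (t₀ - s) (B (φ t s))))
          = (∫ s in (0:ℝ)..c, ψ (Tb (t₀ - s) (B (φ t s))))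
            + ∫ s in c..t₀, ψ (Tb (t₀ - s) (B (φ t s))) :=
        (intervalIntegral.integral_add_adjacent_intervals hint1 hint2).symm
      have hpiece1 : (∫ s in (0:ℝ)..c, ψ (Tb (t₀ - s) (B (φ t s)))) = 0 := by
        have hEq : EqOn (fun s : ℝ => ψ (Tb (t₀ - s) (B (φ t s)))) (fun _ : ℝ => (0:ℝ))
            (uIcc (0 : ℝ) c) := by
          intro s hs
          rw [uIcc_of_le hc0] at hs
          have hmax : max (s + t - t₀) 0 = 0 := max_eq_right (by
            have := hs.2
            rw [hcdef] at this
            linarith)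
          simp only [hφdef, hmax, hf0, map_zero]
        rw [intervalIntegral.integral_congr hEq]
        simp
      have hpiece2 : (∫ s in c..t₀, ψ (Tb (t₀ - s) (B (φ t s))))
          = ∫ s in (0:ℝ)..t, ψ (Tb (t - s) (B (f s))) := by
        have hEq : EqOn (fun s : ℝ => ψ (Tb (t₀ - s) (B (φ t s))))
            (fun s : ℝ => ψ (Tb (t - (s - c)) (B (f (s - c))))) (uIcc c t₀) := by
          intro s hs
          rw [uIcc_of_le hct] at hs
          have hmax : max (s + t - t₀) 0 = s - c := by
            rw [max_eq_left (by
              have := hs.1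
              rw [hcdef] at this
              linarith)]
            rw [hcdef]; ring
          have htt : t₀ - s = t - (s - c) := by rw [hcdef]; ring
          simp only [hφdef, hmax, htt]
        rw [intervalIntegral.integral_congr hEq,
          intervalIntegral.integral_comp_sub_right (fun y => ψ (Tb (t - y) (B (f y)))) c]
        have h1 : c - c = 0 := sub_self c
        have h2 : t₀ - c = t := by rw [hcdef]; ring
        rw [h1, h2]
      have : ψ I = ψ (e (g t)) := by
        rw [hψI, hψg, hsplit, hpiece1, hpiece2, zero_add]
      exact absurd hψ (by rw [this]; exact lt_irrefl _)
    rwa [hIeq] at hI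
  -- g 0 = 0
  have hg0 : g 0 = 0 := by
    have h0 := hg 0
    rw [min_eq_left ht₀0] at h0
    have hzero : IsRiemannIntegral (fun s : ℝ => Tb (t₀ - s) (B (φ 0 s))) 0 t₀ (0 : Xb) := by
      apply isRiemannIntegral_zero_of_eqOn ht₀0
      intro s hs
      have hmax : max (s + 0 - t₀) 0 = 0 := max_eq_right (by linarith [hs.2])
      simp only [hφdef, hmax, hf0, map_zero]
    have heq0 : e (g 0) = 0 := h0.unique hzero
    apply he
    rw [heq0, map_zero]
  -- continuity of g
  have hgc : ContinuousOn g (Icc (0 : ℝ) t₀) := by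
    intro t ht
    show Tendsto g (𝓝[Icc (0 : ℝ) t₀] t) (𝓝 (g t))
    rw [hΓ.tendsto_nhds]
    intro i ε hε
    obtain ⟨K, hK, hdK⟩ := hd i
    have hballs : ∀ ε' : ℝ, 0 < ε' → {z : X | Γ i z < ε'} ∈ 𝓝 (0 : X) := by
      intro ε' hε'
      have hset : {z : X | Γ i z < ε'} = (Γ i).ball 0 ε' := by
        ext z; simp [Seminorm.mem_ball_zero]
      rw [hset]
      exact hΓ.hasBasis.mem_of_mem (Γ.basisSets_singleton_mem i hε')
    obtain ⟨δ, hδ, hmod⟩ := seminorm_uniform_mod (Γ i) hballs hfc hε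
    have hev : ∀ᶠ t' in 𝓝[Icc (0 : ℝ) t₀] t, |t' - t| ≤ δ := by
      have hball : Metric.closedBall t δ ∈ 𝓝 t := Metric.closedBall_mem_nhds t hδ
      filter_upwards [nhdsWithin_le_nhds hball] with t' ht'
      rwa [Metric.mem_closedBall, Real.dist_eq] at ht'
    filter_upwards [hev, self_mem_nhdsWithin] with t' hdist ht'
    have hgt := hg t
    rw [hmin t ht] at hgt
    have hgt' := hg t'
    rw [hmin t' ht'] at hgt'
    have hsubR := hgt'.sub hgt
    have hfun : (fun s : ℝ => Tb (t₀ - s) (B (φ t' s)) - Tb (t₀ - s) (B (φ t s)))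
        = fun s : ℝ => Tb (t₀ - s) (B (φ t' s - φ t s)) := by
      funext s
      rw [map_sub B, map_sub (Tb (t₀ - s))]
    rw [hfun] at hsubR
    rw [show e (g t') - e (g t) = e (g t' - g t) from (map_sub e _ _).symm] at hsubR
    have hcont' : ContinuousOn (fun s : ℝ => φ t' s - φ t s) (Icc (0 : ℝ) t₀) :=
      (hφcont t' ht'.2).sub (hφcont t ht.2)
    have hineq := hdK (fun s : ℝ => φ t' s - φ t s) hcont' (g t' - g t) hsubR
    have hsup : (⨆ s ∈ Icc (0 : ℝ) t₀, Γ i (φ t' s - φ t s)) ≤ ε := by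
      apply Real.iSup_le _ hε.le
      intro s
      apply Real.iSup_le _ hε.le
      intro hs
      apply le_of_lt
      have hmem1 : max (s + t' - t₀) 0 ∈ Icc (0 : ℝ) t₀ :=
        ⟨le_max_right _ _, max_le (by linarith [hs.2, ht'.2]) ht₀0⟩
      have hmem2 : max (s + t - t₀) 0 ∈ Icc (0 : ℝ) t₀ :=
        ⟨le_max_right _ _, max_le (by linarith [hs.2, ht.2]) ht₀0⟩
      have habs : |max (s + t' - t₀) 0 - max (s + t - t₀) 0| ≤ δ := by
        have h1 := abs_max_sub_max_le_abs (s + t' - t₀) (s + t - t₀) 0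
        rw [show s + t' - t₀ - (s + t - t₀) = t' - t by ring] at h1
        exact h1.trans hdist
      have := hmod _ hmem1 _ hmem2 habs
      simpa only [hφdef] using this
    calc Γ i (g t' - g t) ≤ K * ⨆ s ∈ Icc (0 : ℝ) t₀, Γ i (φ t' s - φ t s) := hineq
      _ ≤ K * ε := mul_le_mul_of_nonneg_left hsup hK.1.le
      _ < ε := by nlinarith [hK.1, hK.2]
  exact ⟨g, ⟨hgc, hg0⟩, hmain⟩
end

section
/- Under the standing assumptions, the following estimate holds: for every p ∈ Γ, with K ∈ (0,1) chosen for p as in assumption (d), one has p^∞((R̄ℬ)ⁿ f) ≤ Kⁿ · p^∞(f) for every n ∈ ℕ and every f ∈ 𝒳, where p^∞(g) = sup_{t∈[0,t₀]} p(g(t)) and (R̄ℬ f)(t) = ∫₀ᵗ T̄(t−s) B f(s) ds. -/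
open Filter Topology Set MeasureTheory

open DS

section DSAux

/-- Real Riemann sums of a continuous function converge to the interval integral. -/
lemma riemann_real {h : ℝ → ℝ} {c : ℝ} (hc : 0 < c) (hcont : ContinuousOn h (Icc 0 c)) :
    Tendsto (fun n : ℕ => (c / (n : ℝ)) * ∑ k ∈ Finset.range n, h (c * (k : ℝ) / (n : ℝ)))
      atTop (𝓝 (∫ s in (0:ℝ)..c, h s)) := by
  rw [Metric.tendsto_atTop]
  intro ε hε
  have hu := isCompact_Icc.uniformContinuousOn_of_continuous hcont
  rw [Metric.uniformContinuousOn_iff] at hu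
  have hε' : 0 < ε / (2 * c) := by positivity
  obtain ⟨δ, hδ, hδ'⟩ := hu (ε / (2 * c)) hε'
  obtain ⟨N₀, hN₀⟩ := exists_nat_gt (c / δ)
  refine ⟨N₀ + 1, fun n hn => ?_⟩
  have hn1 : 1 ≤ n := le_trans (Nat.le_add_left 1 N₀) hn
  have hnR : (0:ℝ) < (n : ℝ) := by exact_mod_cast hn1
  have hnne : (n : ℝ) ≠ 0 := ne_of_gt hnR
  have hmesh : c / (n : ℝ) < δ := by
    rw [div_lt_iff₀ hnR]
    have h1 : c / δ < (n : ℝ) := lt_of_lt_of_le hN₀ (by exact_mod_cast le_trans (Nat.le_succ N₀) hn)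
    calc c = (c / δ) * δ := by field_simp
      _ < (n : ℝ) * δ := mul_lt_mul_of_pos_right h1 hδ
      _ = δ * (n : ℝ) := mul_comm _ _
  set a : ℕ → ℝ := fun k => c * (k : ℝ) / (n : ℝ) with ha
  have hak_mem : ∀ k ≤ n, a k ∈ Icc (0:ℝ) c := by
    intro k hk
    constructor
    · positivity
    · rw [ha, div_le_iff₀ hnR]
      have : (k : ℝ) ≤ (n : ℝ) := by exact_mod_cast hk
      nlinarith
  have hstep : ∀ k : ℕ, a (k + 1) - a k = c / (n : ℝ) := by
    intro k
    rw [ha]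
    push_cast
    field_simp
    ring
  have hmono : ∀ k : ℕ, a k ≤ a (k + 1) := by
    intro k
    have := hstep k
    have h2 : (0:ℝ) ≤ c / (n : ℝ) := by positivity
    linarith
  have hint : ∀ k < n, IntervalIntegrable h volume (a k) (a (k + 1)) := by
    intro k hk
    apply ContinuousOn.intervalIntegrable
    apply hcont.mono
    rw [uIcc_of_le (hmono k)]
    exact Icc_subset_Icc (hak_mem k hk.le).1 (hak_mem (k + 1) hk).2
  have h0 : a 0 = 0 := by simp [ha]
  have hN : a n = c := by rw [ha]; field_simp
  have hsplit : (∫ s in (0:ℝ)..c, h s) = ∑ k ∈ Finset.range n, ∫ s in a k..a (k + 1), h s := by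
    rw [intervalIntegral.sum_integral_adjacent_intervals hint, h0, hN]
  have hsum : (c / (n : ℝ)) * ∑ k ∈ Finset.range n, h (a k)
      = ∑ k ∈ Finset.range n, ∫ s in a k..a (k + 1), (fun _ => h (a k)) s := by
    rw [Finset.mul_sum]
    refine Finset.sum_congr rfl fun k hk => ?_
    rw [intervalIntegral.integral_const, hstep k, smul_eq_mul, mul_comm]
  have key : ∀ k ∈ Finset.range n, |∫ s in a k..a (k + 1), (h (a k) - h s)| ≤ (ε / (2 * c)) * (c / (n : ℝ)) := by
    intro k hk
    have hk' := Finset.mem_range.mp hk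
    have hbd : ∀ s ∈ Set.uIoc (a k) (a (k + 1)), ‖h (a k) - h s‖ ≤ ε / (2 * c) := by
      intro s hs
      rw [Set.uIoc_of_le (hmono k)] at hs
      have hs1 : s ∈ Icc (0:ℝ) c :=
        ⟨le_trans (hak_mem k hk'.le).1 hs.1.le, le_trans hs.2 (hak_mem (k + 1) hk').2⟩
      have hdist : dist (a k) s < δ := by
        rw [Real.dist_eq, abs_sub_comm, abs_of_nonneg (by linarith [hs.1.le] : (0:ℝ) ≤ s - a k)]
        have := hstep k
        have := hs.2
        linarith [hmesh]
      have := hδ' (a k) (hak_mem k hk'.le) s hs1 hdist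
      rw [Real.dist_eq] at this
      rw [Real.norm_eq_abs]
      exact this.le
    have := intervalIntegral.norm_integral_le_of_norm_le_const hbd
    rw [Real.norm_eq_abs] at this
    calc |∫ s in a k..a (k + 1), (h (a k) - h s)| ≤ (ε / (2 * c)) * |a (k + 1) - a k| := this
      _ = (ε / (2 * c)) * (c / (n : ℝ)) := by rw [hstep k, abs_of_nonneg (by positivity)]
  have hdiff : ∀ k ∈ Finset.range n,
      (∫ s in a k..a (k + 1), (fun _ => h (a k)) s) - (∫ s in a k..a (k + 1), h s)
        = ∫ s in a k..a (k + 1), (h (a k) - h s) := by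
    intro k hk
    exact (intervalIntegral.integral_sub intervalIntegrable_const (hint k (Finset.mem_range.mp hk))).symm
  calc dist ((c / (n : ℝ)) * ∑ k ∈ Finset.range n, h (c * (k : ℝ) / (n : ℝ)))
        (∫ s in (0:ℝ)..c, h s)
      = |∑ k ∈ Finset.range n, ∫ s in a k..a (k + 1), (h (a k) - h s)| := by
        rw [Real.dist_eq, hsum, hsplit, ← Finset.sum_sub_distrib, Finset.sum_congr rfl hdiff]
    _ ≤ ∑ k ∈ Finset.range n, |∫ s in a k..a (k + 1), (h (a k) - h s)| :=
        Finset.abs_sum_le_sum_abs _ _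
    _ ≤ ∑ _k ∈ Finset.range n, (ε / (2 * c)) * (c / (n : ℝ)) := Finset.sum_le_sum key
    _ = (n : ℝ) * ((ε / (2 * c)) * (c / (n : ℝ))) := by
        rw [Finset.sum_const, Finset.card_range, nsmul_eq_mul]
    _ = ε / 2 := by field_simp
    _ < ε := half_lt_self hε


lemma phi_riemann {E : Type*} [AddCommGroup E] [Module ℝ E] [TopologicalSpace E]
    {g : ℝ → E} {a b : ℝ} {I : E} (hg : IsRiemannIntegral g a b I) (φ : E →L[ℝ] ℝ) :
    IsRiemannIntegral (fun s => φ (g s)) a b (φ I) := by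
  have h := (φ.continuous.tendsto I).comp hg
  refine h.congr fun n => ?_
  simp [Function.comp, _root_.map_smul, map_sum]

lemma riemann_unique {h : ℝ → ℝ} {c I : ℝ} (hc : 0 < c) (hcont : ContinuousOn h (Icc 0 c))
    (hI : IsRiemannIntegral h 0 c I) : I = ∫ s in (0:ℝ)..c, h s := by
  refine tendsto_nhds_unique ?_ (riemann_real hc hcont)
  have h' := hI
  unfold IsRiemannIntegral at h'
  simpa [sub_zero, smul_eq_mul] using h'

lemma kernelCont {X Xb : Type*}
    [AddCommGroup X] [Module ℝ X] [TopologicalSpace X] [IsTopologicalAddGroup X]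
    [AddCommGroup Xb] [Module ℝ Xb] [TopologicalSpace Xb] [IsTopologicalAddGroup Xb]
    (Tb : ℝ → Xb →L[ℝ] Xb)
    (hTbc : ∀ x : Xb, ContinuousOn (fun t : ℝ => Tb t x) (Ici (0:ℝ)))
    (t₀ : ℝ) (ht₀ : 0 < t₀)
    (hloc : IsLocallyEquicontinuous Tb)
    (B : X →L[ℝ] Xb) (φ : Xb →L[ℝ] ℝ)
    {f : ℝ → X} {c : ℝ} (hc0 : 0 ≤ c) (hct : c ≤ t₀)
    (hf : ContinuousOn f (Icc 0 c)) :
    ContinuousOn (fun u : ℝ => φ (Tb (c - u) (B (f u)))) (Icc 0 c) := by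
  set pφ : Seminorm ℝ Xb := (normSeminorm ℝ ℝ).comp (φ : Xb →ₗ[ℝ] ℝ) with hpφ
  have hpφ_apply : ∀ x : Xb, pφ x = ‖φ x‖ := fun x => rfl
  have hpφc : Continuous fun x : Xb => pφ x := φ.continuous.norm
  obtain ⟨q, hqc, M, hM0, hbb⟩ := hloc t₀ ht₀ pφ hpφc
  intro u' hu'
  set F : ℝ → ℝ := fun u => φ (Tb (c - u) (B (f u))) with hF
  set ρ : ℝ → ℝ := fun u =>
    M * q (B (f u) - B (f u')) + ‖φ (Tb (c - u) (B (f u'))) - φ (Tb (c - u') (B (f u')))‖ with hρdef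
  have hbound : ∀ u ∈ Icc (0:ℝ) c, ‖F u - F u'‖ ≤ ρ u := by
    intro u hu
    have hmem : c - u ∈ Icc (0:ℝ) t₀ := ⟨by linarith [hu.2], by linarith [hu.1]⟩
    have hdecomp : F u - F u'
        = φ (Tb (c - u) (B (f u)) - Tb (c - u) (B (f u')))
          + (φ (Tb (c - u) (B (f u'))) - φ (Tb (c - u') (B (f u')))) := by
      rw [map_sub]; simp [hF]
    rw [hdecomp]
    refine (norm_add_le _ _).trans ?_
    have h1 : ‖φ (Tb (c - u) (B (f u)) - Tb (c - u) (B (f u')))‖ ≤ M * q (B (f u) - B (f u')) := by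
      rw [← hpφ_apply, ← map_sub]
      exact hbb _ (c - u) hmem
    exact add_le_add h1 le_rfl
  have part1 : Tendsto (fun u => M * q (B (f u) - B (f u'))) (𝓝[Icc (0:ℝ) c] u') (𝓝 0) := by
    have c1 : ContinuousWithinAt (fun u => q (B (f u) - B (f u'))) (Icc (0:ℝ) c) u' :=
      (hqc.comp_continuousOn ((B.continuous.comp_continuousOn hf).sub continuousOn_const)) u' hu'
    have := c1.tendsto
    rw [sub_self, map_zero] at this
    have h2 := this.const_mul M
    rwa [mul_zero] at h2
  have part2 : Tendsto (fun u => ‖φ (Tb (c - u) (B (f u'))) - φ (Tb (c - u') (B (f u')))‖)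
      (𝓝[Icc (0:ℝ) c] u') (𝓝 0) := by
    have cψ : ContinuousOn (fun s : ℝ => φ (Tb s (B (f u')))) (Ici (0:ℝ)) :=
      φ.continuous.comp_continuousOn (hTbc (B (f u')))
    have hmaps : MapsTo (fun u : ℝ => c - u) (Icc (0:ℝ) c) (Ici (0:ℝ)) := by
      intro u hu; exact sub_nonneg.2 hu.2
    have cc : ContinuousWithinAt (fun u : ℝ => φ (Tb (c - u) (B (f u')))) (Icc (0:ℝ) c) u' :=
      ContinuousWithinAt.comp (f := fun u : ℝ => c - u)
        (g := fun s : ℝ => φ (Tb s (B (f u'))))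
        (cψ (c - u') (sub_nonneg.2 hu'.2))
        ((continuous_const.sub continuous_id).continuousWithinAt) hmaps
    have h3 : Tendsto (fun u => φ (Tb (c - u) (B (f u'))) - φ (Tb (c - u') (B (f u'))))
        (𝓝[Icc (0:ℝ) c] u') (𝓝 (φ (Tb (c - u') (B (f u'))) - φ (Tb (c - u') (B (f u'))))) :=
      cc.tendsto.sub tendsto_const_nhds
    rw [sub_self] at h3
    simpa using h3.norm
  have hρ : Tendsto ρ (𝓝[Icc (0:ℝ) c] u') (𝓝 0) := by
    have := part1.add part2
    rwa [add_zero] at this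
  have hsq : Tendsto (fun u => F u - F u') (𝓝[Icc (0:ℝ) c] u') (𝓝 0) :=
    squeeze_zero_norm' (eventually_mem_nhdsWithin.mono hbound) hρ
  exact tendsto_sub_nhds_zero_iff.mp hsq

lemma real_biSup_le {F : ℝ → ℝ} {s : Set ℝ} {C : ℝ} (h0 : 0 ≤ C) (h : ∀ t ∈ s, F t ≤ C) :
    (⨆ t ∈ s, F t) ≤ C :=
  Real.iSup_le (fun t => Real.iSup_le (h t) h0) h0

lemma real_le_biSup {F : ℝ → ℝ} {s : Set ℝ} (hB : ∃ C, ∀ t ∈ s, F t ≤ C) {τ : ℝ} (hτ : τ ∈ s) :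
    F τ ≤ ⨆ t ∈ s, F t := by
  obtain ⟨C, hC⟩ := hB
  have hb : BddAbove (range fun t => ⨆ _ : t ∈ s, F t) := by
    refine ⟨max C 0, ?_⟩
    rintro _ ⟨t, rfl⟩
    show (⨆ _ : t ∈ s, F t) ≤ max C 0
    by_cases h : t ∈ s
    · rw [ciSup_pos h]; exact le_max_of_le_left (hC t h)
    · haveI : IsEmpty (t ∈ s) := ⟨h⟩
      rw [Real.iSup_of_isEmpty]; exact le_max_right _ _
  have h1 : (⨆ _ : τ ∈ s, F τ) ≤ ⨆ t ∈ s, F t := le_ciSup hb τ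
  rwa [ciSup_pos hτ] at h1

lemma real_biSup_nonneg {F : ℝ → ℝ} {s : Set ℝ} (h : ∀ t ∈ s, 0 ≤ F t) :
    0 ≤ ⨆ t ∈ s, F t :=
  Real.iSup_nonneg fun t => Real.iSup_nonneg fun ht => h t ht

end DSAux


/-- Under the standing assumptions of the Desch–Schappacher theorem: for every seminorm
`Γ i` of the fundamental system and every `K ∈ (0,1)` chosen for `Γ i` as in assumption
(d), one has `p^∞((R̄ℬ)ⁿ f) ≤ Kⁿ · p^∞(f)` for every `n ∈ ℕ` and every `f ∈ 𝒳`, where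
`p^∞(g) = sup_{t ∈ [0,t₀]} Γ i (g t)`. -/
theorem RB_iterate_estimate
    {X Xb : Type*} {ι : Type*} [Nonempty ι]
    [AddCommGroup X] [Module ℝ X] [UniformSpace X] [IsUniformAddGroup X]
    [ContinuousSMul ℝ X] [T2Space X]
    [AddCommGroup Xb] [Module ℝ Xb] [UniformSpace Xb] [IsUniformAddGroup Xb]
    [ContinuousSMul ℝ Xb] [T2Space Xb] [LocallyConvexSpace ℝ Xb]
    (hXsc : SeqComplete X) (hXbsc : SeqComplete Xb)
    (Γ : SeminormFamily ℝ X ι) (hΓ : WithSeminorms Γ)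
    (T : ℝ → X →L[ℝ] X) (hT : IsC0Semigroup T) (hTloc : IsLocallyEquicontinuous T)
    (domA : Set X) (A : X → X) (hA : IsGenerator T domA A)
    (e : X →L[ℝ] Xb) (he : Function.Injective e) (hedense : DenseRange e)
    (Tb : ℝ → Xb →L[ℝ] Xb) (hTb : IsC0Semigroup Tb) (hTbloc : IsLocallyEquicontinuous Tb)
    (Ab : Xb → Xb) (hAb : IsGenerator Tb (Set.range e) Ab)
    (hTbe : ∀ t : ℝ, 0 ≤ t → ∀ x : X, Tb t (e x) = e (T t x))
    (B : X →L[ℝ] Xb)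
    (t₀ : ℝ) (ht₀ : 0 < t₀)
    -- condition (c): the integral `∫₀^{t₀} T̄(t₀ - t) B f(t) dt` belongs to `X`
    (hc : ∀ f : ℝ → X, ContinuousOn f (Icc (0 : ℝ) t₀) →
      ∃ x : X, IsRiemannIntegral (fun t : ℝ => Tb (t₀ - t) (B (f t))) 0 t₀ (e x))
    -- condition (d): `p(∫₀^{t₀} T̄(t₀ - t) B f(t) dt) ≤ K · sup_{t ∈ [0,t₀]} p(f t)`
    (hd : ∀ i : ι, ∃ K : ℝ, K ∈ Ioo (0 : ℝ) 1 ∧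
      ∀ f : ℝ → X, ContinuousOn f (Icc (0 : ℝ) t₀) → ∀ x : X,
        IsRiemannIntegral (fun t : ℝ => Tb (t₀ - t) (B (f t))) 0 t₀ (e x) →
          Γ i x ≤ K * ⨆ t ∈ Icc (0 : ℝ) t₀, Γ i (f t))
    -- `RB` is the operator `R̄ℬ : 𝒳 → 𝒳`, `(R̄ℬ f)(t) = ∫₀ᵗ T̄(t-s) B f(s) ds`
    (RB : (ℝ → X) → ℝ → X)
    (hRB : ∀ f : ℝ → X, MemXc t₀ f → MemXc t₀ (RB f) ∧
      ∀ t ∈ Icc (0 : ℝ) t₀,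
        IsRiemannIntegral (fun s : ℝ => Tb (t - s) (B (f s))) 0 t (e (RB f t)))
    :
    ∀ i : ι, ∀ K : ℝ, K ∈ Ioo (0 : ℝ) 1 →
      (∀ f : ℝ → X, ContinuousOn f (Icc (0 : ℝ) t₀) → ∀ x : X,
        IsRiemannIntegral (fun t : ℝ => Tb (t₀ - t) (B (f t))) 0 t₀ (e x) →
          Γ i x ≤ K * ⨆ t ∈ Icc (0 : ℝ) t₀, Γ i (f t)) →
      ∀ (n : ℕ) (f : ℝ → X), MemXc t₀ f →
        (⨆ t ∈ Icc (0 : ℝ) t₀, Γ i ((RB^[n] f) t)) ≤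
          K ^ n * ⨆ t ∈ Icc (0 : ℝ) t₀, Γ i (f t) := by
  intro i K hK hdK
  classical
  have bdd : ∀ f : ℝ → X, ContinuousOn f (Icc (0:ℝ) t₀) →
      ∃ C, ∀ τ ∈ Icc (0:ℝ) t₀, Γ i (f τ) ≤ C := by
    intro f hf
    have himg : BddAbove ((fun τ => Γ i (f τ)) '' Icc (0:ℝ) t₀) :=
      (isCompact_Icc.image_of_continuousOn
        ((hΓ.continuous_seminorm i).comp_continuousOn hf)).bddAbove
    obtain ⟨C, hC⟩ := himg
    exact ⟨C, fun τ hτ => hC (mem_image_of_mem _ hτ)⟩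
  have key : ∀ f : ℝ → X, MemXc t₀ f →
      (⨆ t ∈ Icc (0:ℝ) t₀, Γ i (RB f t)) ≤ K * ⨆ t ∈ Icc (0:ℝ) t₀, Γ i (f t) := by
    intro f hf
    have hP0 : 0 ≤ ⨆ t ∈ Icc (0:ℝ) t₀, Γ i (f t) :=
      real_biSup_nonneg fun t _ => apply_nonneg _ _
    refine real_biSup_le (mul_nonneg hK.1.le hP0) ?_
    intro t ht
    rcases eq_or_lt_of_le ht.1 with h0 | h0
    · have hz : RB f 0 = 0 := ((hRB f hf).1).2
      rw [← h0, hz, map_zero]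
      exact mul_nonneg hK.1.le hP0
    · set d : ℝ := t₀ - t with hd
      have hd0 : 0 ≤ d := sub_nonneg.2 ht.2
      have hdt : d ≤ t₀ := by rw [hd]; linarith [ht.1]
      have hmapsTo : ∀ s ∈ Icc (0:ℝ) t₀, max (s - d) 0 ∈ Icc (0:ℝ) t₀ := by
        intro s hs
        exact ⟨le_max_right _ _, max_le (by linarith [hs.2]) ht₀.le⟩
      set g : ℝ → X := fun s => f (max (s - d) 0) with hg
      have hgcont : ContinuousOn g (Icc (0:ℝ) t₀) := by
        have hcomp : ContinuousOn (f ∘ (fun s : ℝ => max (s - d) 0)) (Icc (0:ℝ) t₀) :=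
          ContinuousOn.comp hf.1
            (((continuous_id.sub continuous_const).max continuous_const).continuousOn) hmapsTo
        exact hcomp
      obtain ⟨x₀, hx₀⟩ := hc g hgcont
      have hS := (hRB f hf).2 t ht
      have hkey : e x₀ = e (RB f t) := by
        by_contra hne
        obtain ⟨φ, hφ⟩ := SeparatingDual.exists_separating_of_ne (R := ℝ) hne
        apply hφ
        have hfc : ContinuousOn f (Icc (0:ℝ) t) := hf.1.mono (Icc_subset_Icc le_rfl ht.2)
        have hcont_h : ContinuousOn (fun u : ℝ => φ (Tb (t - u) (B (f u)))) (Icc (0:ℝ) t) :=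
          kernelCont Tb hTb.2.2 t₀ ht₀ hTbloc B φ h0.le ht.2 hfc
        have hcont_h' : ContinuousOn (fun s : ℝ => φ (Tb (t₀ - s) (B (g s)))) (Icc (0:ℝ) t₀) :=
          kernelCont Tb hTb.2.2 t₀ ht₀ hTbloc B φ ht₀.le le_rfl hgcont
        have e1 : φ (e (RB f t)) = ∫ s in (0:ℝ)..t, φ (Tb (t - s) (B (f s))) :=
          riemann_unique h0 hcont_h (phi_riemann hS φ)
        have e2 : φ (e x₀) = ∫ s in (0:ℝ)..t₀, φ (Tb (t₀ - s) (B (g s))) :=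
          riemann_unique ht₀ hcont_h' (phi_riemann hx₀ φ)
        have hint1 : IntervalIntegrable (fun s : ℝ => φ (Tb (t₀ - s) (B (g s)))) volume 0 d := by
          apply ContinuousOn.intervalIntegrable
          apply hcont_h'.mono
          rw [uIcc_of_le hd0]
          exact Icc_subset_Icc le_rfl hdt
        have hint2 : IntervalIntegrable (fun s : ℝ => φ (Tb (t₀ - s) (B (g s)))) volume d t₀ := by
          apply ContinuousOn.intervalIntegrable
          apply hcont_h'.mono
          rw [uIcc_of_le hdt]
          exact Icc_subset_Icc hd0 le_rfl
        have hsplit : (∫ s in (0:ℝ)..t₀, φ (Tb (t₀ - s) (B (g s))))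
            = (∫ s in (0:ℝ)..d, φ (Tb (t₀ - s) (B (g s))))
              + ∫ s in d..t₀, φ (Tb (t₀ - s) (B (g s))) :=
          (intervalIntegral.integral_add_adjacent_intervals hint1 hint2).symm
        have z1 : (∫ s in (0:ℝ)..d, φ (Tb (t₀ - s) (B (g s)))) = 0 := by
          rw [intervalIntegral.integral_congr (g := fun _ => (0:ℝ)) ?_,
            intervalIntegral.integral_zero]
          intro s hs
          rw [uIcc_of_le hd0] at hs
          have hmax : max (s - d) 0 = 0 := max_eq_right (by linarith [hs.2])
          simp [hg, hmax, hf.2]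
        have z2 : (∫ s in d..t₀, φ (Tb (t₀ - s) (B (g s))))
            = ∫ s in d..t₀, φ (Tb (t - (s - d)) (B (f (s - d)))) := by
          apply intervalIntegral.integral_congr
          intro s hs
          rw [uIcc_of_le hdt] at hs
          have h1 : max (s - d) 0 = s - d := max_eq_left (by linarith [hs.1])
          have h2 : t₀ - s = t - (s - d) := by rw [hd]; ring
          simp only [hg, h1, h2]
        have z3 : (∫ s in d..t₀, φ (Tb (t - (s - d)) (B (f (s - d)))))
            = ∫ s in (0:ℝ)..t, φ (Tb (t - s) (B (f s))) := by
          have hcs := intervalIntegral.integral_comp_sub_right (a := d) (b := t₀)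
            (fun u : ℝ => φ (Tb (t - u) (B (f u)))) d
          rw [hcs, sub_self, hd, sub_sub_cancel]
        rw [e2, e1, hsplit, z1, zero_add, z2, z3]
      have hdineq := hdK g hgcont x₀ hx₀
      rw [he hkey] at hdineq
      refine hdineq.trans ?_
      refine mul_le_mul_of_nonneg_left ?_ hK.1.le
      exact real_biSup_le hP0 fun s hs => real_le_biSup (bdd f hf.1) (hmapsTo s hs)
  intro n f hf
  have hmem : ∀ m : ℕ, MemXc t₀ (RB^[m] f) := by
    intro m
    induction m with
    | zero => exact hf
    | succ m ih => rw [Function.iterate_succ_apply']; exact (hRB _ ih).1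
  induction n with
  | zero => simpa using le_rfl
  | succ n ih =>
    rw [Function.iterate_succ_apply', pow_succ]
    calc (⨆ t ∈ Icc (0:ℝ) t₀, Γ i (RB (RB^[n] f) t))
        ≤ K * ⨆ t ∈ Icc (0:ℝ) t₀, Γ i ((RB^[n] f) t) := key _ (hmem n)
      _ ≤ K * (K ^ n * ⨆ t ∈ Icc (0:ℝ) t₀, Γ i (f t)) :=
          mul_le_mul_of_nonneg_left ih hK.1.le
      _ = K ^ n * K * ⨆ t ∈ Icc (0:ℝ) t₀, Γ i (f t) := by ring
end

section
/- Under the standing assumptions, assume additionally that D(C) is dense in X. Let 𝒟f = f′ on D(𝒟) = {f ∈ 𝒳 ∩ C¹([0,t₀],X) : f′(0) = 0} and let 𝒞 be the operator (𝒞f)(t) = C f(t) on D(𝒞) = {f ∈ 𝒳 : f(t) ∈ D(C) for all t and t ↦ C f(t) is continuous}, where C x = Ā x + B x on D(C) = {x ∈ X : Ā x + B x ∈ X}. Then D(𝒟) ∩ D(𝒞) is dense in D(𝒟) with respect to the graph topology on D(𝒟) generated by the seminorms f ↦ p^∞(f) + p^∞(f′), p ∈ Γ. -/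
open Filter Topology Set MeasureTheory

open DS

set_option linter.unusedSectionVars false
set_option linter.unusedVariables false

namespace DSAux

/-- The hat function. -/
noncomputable def dsPhi (y : ℝ) : ℝ := max 0 (1 - |y|)

lemma dsPhi_nonneg (y : ℝ) : 0 ≤ dsPhi y := le_max_left _ _

lemma dsPhi_continuous : Continuous dsPhi :=
  continuous_const.max (continuous_const.sub continuous_abs)

lemma dsPhi_eq_zero {y : ℝ} (hy : 1 ≤ |y|) : dsPhi y = 0 :=
  max_eq_left (by linarith)

lemma abs_lt_one_of_dsPhi_pos {y : ℝ} (hy : 0 < dsPhi y) : |y| < 1 := by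
  by_contra hc
  rw [dsPhi_eq_zero (not_lt.mp hc)] at hy
  exact lt_irrefl _ hy

lemma dsPhi_pair {x : ℝ} (hx : x ∈ Icc (0:ℝ) 1) : dsPhi x + dsPhi (x - 1) = 1 := by
  obtain ⟨h0, h1⟩ := hx
  rw [dsPhi, dsPhi, abs_of_nonneg h0, abs_of_nonpos (by linarith : x - 1 ≤ 0),
    max_eq_right (by linarith), max_eq_right (by linarith)]
  ring

lemma dsPhi_sum : ∀ n : ℕ, 1 ≤ n → ∀ x ∈ Icc (0:ℝ) (n:ℝ),
    ∑ k ∈ Finset.range (n+1), dsPhi (x - (k:ℝ)) = 1 := by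
  intro n
  induction n with
  | zero => intro h; exact absurd h (by norm_num)
  | succ m ih =>
    intro _ x hx
    rcases Nat.eq_zero_or_pos m with hm | hm
    · subst hm
      rw [Finset.sum_range_succ, Finset.sum_range_one]
      push_cast
      have := dsPhi_pair (x := x) (by simpa using hx)
      simpa using this
    · rw [Finset.sum_range_succ]
      rcases le_or_gt x (m : ℝ) with hxm | hxm
      · rw [ih hm x ⟨hx.1, hxm⟩, dsPhi_eq_zero (by
          rw [abs_of_nonpos (by push_cast; linarith)]
          push_cast; linarith)]
        ring
      · have hzero : ∀ k ∈ Finset.range m, dsPhi (x - (k:ℝ)) = 0 := by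
          intro k hk
          have hk' : (k:ℝ) ≤ (m:ℝ) - 1 := by
            have : k + 1 ≤ m := Finset.mem_range.mp hk
            have : ((k:ℝ) + 1) ≤ (m:ℝ) := by exact_mod_cast this
            linarith
          exact dsPhi_eq_zero (by rw [abs_of_nonneg (by linarith)]; linarith)
        rw [Finset.sum_range_succ, Finset.sum_eq_zero hzero]
        have hpair := dsPhi_pair (x := x - m) ⟨by linarith, by
          have := hx.2; push_cast at this ⊢; linarith⟩
        push_cast
        have : x - (m:ℝ) - 1 = x - ((m:ℝ) + 1) := by ring
        rw [this] at hpair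
        linarith

variable {X : Type*} [AddCommGroup X] [Module ℝ X] [UniformSpace X] [IsUniformAddGroup X]
  [ContinuousSMul ℝ X]

lemma seminorm_sum_apply {ι : Type*} (Γ : ι → Seminorm ℝ X) (s : Finset ι) (x : X) :
    (∑ i ∈ s, Γ i) x = ∑ i ∈ s, Γ i x := by
  induction s using Finset.cons_induction with
  | empty => simp
  | cons i s hi ihs => simp [Finset.sum_cons, Seminorm.add_apply, ihs]

lemma seminorm_map_sum_le {ι : Type*} (q : Seminorm ℝ X) (s : Finset ι) (v : ι → X) :
    q (∑ i ∈ s, v i) ≤ ∑ i ∈ s, q (v i) := by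
  induction s using Finset.cons_induction with
  | empty => simp
  | cons i s hi ihs =>
    rw [Finset.sum_cons, Finset.sum_cons]
    exact le_trans (map_add_le_add q _ _) (by linarith)

/-- Derivative (in the `HasDerivWithinAtLC` sense) of a finite sum of scalar functions
times fixed vectors. -/
lemma hasDerivWithinAtLC_sum_smul {ι : Type*} (s : Finset ι) (c : ι → ℝ → ℝ) (c' : ι → ℝ)
    (y : ι → X) (t : ℝ) (S : Set ℝ) (hc : ∀ k ∈ s, HasDerivAt (c k) (c' k) t) :
    DS.HasDerivWithinAtLC (fun u => ∑ k ∈ s, c k u • y k) (∑ k ∈ s, c' k • y k) S t := by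
  unfold DS.HasDerivWithinAtLC
  have heq : (fun u : ℝ => (u - t)⁻¹ • ((∑ k ∈ s, c k u • y k) - ∑ k ∈ s, c k t • y k))
      = fun u : ℝ => ∑ k ∈ s, ((u - t)⁻¹ * (c k u - c k t)) • y k := by
    funext u
    rw [← Finset.sum_sub_distrib, Finset.smul_sum]
    congr 1
    funext k
    rw [show c k u • y k - c k t • y k = (c k u - c k t) • y k from (sub_smul _ _ _).symm,
      smul_smul]
  rw [heq]
  apply tendsto_finset_sum
  intro k hk
  have h1 : Tendsto (slope (c k) t) (𝓝[≠] t) (𝓝 (c' k)) :=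
    hasDerivAt_iff_tendsto_slope.mp (hc k hk)
  have h2 : Tendsto (fun u => slope (c k) t u • y k) (𝓝[≠] t) (𝓝 (c' k • y k)) :=
    h1.smul_const _
  have h3 := h2.mono_left (nhdsWithin_mono t (fun u hu => hu.2 : S \ {t} ⊆ {t}ᶜ))
  refine h3.congr (fun u => ?_)
  rw [slope_def_field, div_eq_inv_mul]

/-- Mean value inequality for seminorms and the bespoke derivative. -/
lemma seminorm_mvt (q : Seminorm ℝ X) (hq : Continuous q) {u u' : ℝ → X} {b : ℝ}
    (hu : ContinuousOn u (Icc (0:ℝ) b))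
    (hder : ∀ t ∈ Icc (0:ℝ) b, DS.HasDerivWithinAtLC u (u' t) (Icc (0:ℝ) b) t)
    {M : ℝ} (hM : ∀ t ∈ Icc (0:ℝ) b, q (u' t) < M) :
    ∀ t ∈ Icc (0:ℝ) b, q (u t - u 0) ≤ M * t := by
  intro ts hts
  obtain ⟨hts0, htsb⟩ := hts
  have hb : (0:ℝ) ≤ b := le_trans hts0 htsb
  have h0Icc : (0:ℝ) ∈ Icc (0:ℝ) b := ⟨le_refl _, hb⟩
  have hMpos : 0 < M := lt_of_le_of_lt (apply_nonneg q _) (hM 0 h0Icc)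
  set A : Set ℝ := {r ∈ Icc (0:ℝ) ts | q (u r - u 0) ≤ M * r} with hA
  have h0A : (0:ℝ) ∈ A := by
    constructor
    · exact ⟨le_refl _, hts0⟩
    · simp
  have hAne : A.Nonempty := ⟨0, h0A⟩
  have hAbdd : BddAbove A := ⟨ts, fun r hr => hr.1.2⟩
  set c := sSup A with hc
  have hcA_ub : ∀ r ∈ A, r ≤ c := fun r hr => le_csSup hAbdd hr
  have hc0 : 0 ≤ c := hcA_ub 0 h0A
  have hcts : c ≤ ts := csSup_le hAne (fun r hr => hr.1.2)
  have hcIcc : c ∈ Icc (0:ℝ) b := ⟨hc0, le_trans hcts htsb⟩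
  -- c belongs to the closure of A, hence satisfies the estimate
  have hclos : c ∈ closure A := (isLUB_csSup hAne hAbdd).mem_closure hAne
  have hcest : q (u c - u 0) ≤ M * c := by
    have hsub : Icc (0:ℝ) ts ⊆ Icc (0:ℝ) b := Icc_subset_Icc (le_refl _) htsb
    have hF : ContinuousOn (fun r => M * r - q (u r - u 0)) (Icc (0:ℝ) ts) := by
      apply ContinuousOn.sub
      · exact (continuous_const.mul continuous_id).continuousOn
      · exact hq.comp_continuousOn ((hu.mono hsub).sub continuousOn_const)
    have hcw : ContinuousWithinAt (fun r => M * r - q (u r - u 0)) A c := by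
      have := (hF c ⟨hc0, hcts⟩).mono (fun r (hr : r ∈ A) => hr.1)
      exact this
    have hne : (𝓝[A] c).NeBot := mem_closure_iff_nhdsWithin_neBot.mp hclos
    have hlim : Tendsto (fun r => M * r - q (u r - u 0)) (𝓝[A] c)
        (𝓝 (M * c - q (u c - u 0))) := hcw
    have : 0 ≤ M * c - q (u c - u 0) := by
      apply ge_of_tendsto hlim
      filter_upwards [self_mem_nhdsWithin] with r hr
      linarith [hr.2]
    linarith
  -- show c = ts
  rcases eq_or_lt_of_le hcts with hceq | hclt
  · rw [← hceq]; exact hcest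
  · exfalso
    have hderc := hder c hcIcc
    set O : Set X := {z | q (z - u' c) < M - q (u' c)} with hO
    have hOopen : IsOpen O := by
      have : O = (fun z => q (z - u' c)) ⁻¹' (Iio (M - q (u' c))) := rfl
      rw [this]
      exact (hq.comp (continuous_id.sub continuous_const)).isOpen_preimage _ isOpen_Iio
    have hOmem : u' c ∈ O := by
      simp only [hO, mem_setOf_eq, sub_self, map_zero]
      linarith [hM c hcIcc]
    have hev : {v : ℝ | (v - c)⁻¹ • (u v - u c) ∈ O} ∈ 𝓝[Icc (0:ℝ) b \ {c}] c :=
      hderc (hOopen.mem_nhds hOmem)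
    rw [mem_nhdsWithin] at hev
    obtain ⟨U, hUopen, hcU, hUsub⟩ := hev
    obtain ⟨δ, hδpos, hball⟩ := Metric.isOpen_iff.mp hUopen c hcU
    set v := min (c + δ/2) ts with hv
    have hcv : c < v := lt_min (by linarith) hclt
    have hvts : v ≤ ts := min_le_right _ _
    have hvb : v ∈ Icc (0:ℝ) b := ⟨le_trans hc0 hcv.le, le_trans hvts htsb⟩
    have hvU : v ∈ U := by
      apply hball
      rw [Metric.mem_ball, Real.dist_eq, abs_of_pos (by linarith : (0:ℝ) < v - c)]
      have : v ≤ c + δ/2 := min_le_left _ _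
      linarith
    have hvmem : v ∈ U ∩ (Icc (0:ℝ) b \ {c}) := ⟨hvU, hvb, fun h => hcv.ne' (by simpa using h)⟩
    have hvO : (v - c)⁻¹ • (u v - u c) ∈ O := hUsub hvmem
    have hqv : q ((v - c)⁻¹ • (u v - u c)) < M := by
      have h1 : q ((v - c)⁻¹ • (u v - u c)) ≤
          q ((v - c)⁻¹ • (u v - u c) - u' c) + q (u' c) := by
        have := map_add_le_add q ((v - c)⁻¹ • (u v - u c) - u' c) (u' c)
        simpa using this
      have h2 : q ((v - c)⁻¹ • (u v - u c) - u' c) < M - q (u' c) := hvO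
      linarith
    have hquv : q (u v - u c) < M * (v - c) := by
      have hvc : (0:ℝ) < v - c := by linarith
      have : q (u v - u c) = (v - c) * q ((v - c)⁻¹ • (u v - u c)) := by
        rw [map_smul_eq_mul, Real.norm_eq_abs, abs_of_pos (inv_pos.mpr hvc)]
        field_simp
      rw [this]
      calc (v - c) * q ((v - c)⁻¹ • (u v - u c)) < (v - c) * M :=
            (mul_lt_mul_iff_right₀ hvc).mpr hqv
        _ = M * (v - c) := mul_comm _ _
    have hvA : v ∈ A := by
      refine ⟨⟨le_trans hc0 hcv.le, hvts⟩, ?_⟩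
      have : q (u v - u 0) ≤ q (u v - u c) + q (u c - u 0) := by
        have := map_add_le_add q (u v - u c) (u c - u 0)
        simpa using this
      nlinarith
    exact absurd (hcA_ub v hvA) (not_le.mpr hcv)

end DSAux

/-- Under the standing assumptions of the Desch–Schappacher theorem, assuming additionally
that `D(C)` is dense in `X`: the set `D(𝒟) ∩ D(𝒞)` is dense in `D(𝒟)` with respect to
the graph topology on `D(𝒟)` generated by the seminorms `f ↦ p^∞(f) + p^∞(f')`, `p ∈ Γ`
(density is expressed by approximation up to `ε` with respect to any finitely many of
these seminorms). -/
theorem dense_in_graph_topology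
    {X Xb : Type*} {ι : Type*} [Nonempty ι]
    [AddCommGroup X] [Module ℝ X] [UniformSpace X] [IsUniformAddGroup X]
    [ContinuousSMul ℝ X] [T2Space X]
    [AddCommGroup Xb] [Module ℝ Xb] [UniformSpace Xb] [IsUniformAddGroup Xb]
    [ContinuousSMul ℝ Xb] [T2Space Xb] [LocallyConvexSpace ℝ Xb]
    (hXsc : SeqComplete X) (hXbsc : SeqComplete Xb)
    (Γ : SeminormFamily ℝ X ι) (hΓ : WithSeminorms Γ)
    (T : ℝ → X →L[ℝ] X) (hT : IsC0Semigroup T) (hTloc : IsLocallyEquicontinuous T)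
    (domA : Set X) (A : X → X) (hA : IsGenerator T domA A)
    (e : X →L[ℝ] Xb) (he : Function.Injective e) (hedense : DenseRange e)
    (Tb : ℝ → Xb →L[ℝ] Xb) (hTb : IsC0Semigroup Tb) (hTbloc : IsLocallyEquicontinuous Tb)
    (Ab : Xb → Xb) (hAb : IsGenerator Tb (Set.range e) Ab)
    (hTbe : ∀ t : ℝ, 0 ≤ t → ∀ x : X, Tb t (e x) = e (T t x))
    (B : X →L[ℝ] Xb)
    (t₀ : ℝ) (ht₀ : 0 < t₀)
    -- condition (c): the integral `∫₀^{t₀} T̄(t₀ - t) B f(t) dt` belongs to `X`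
    (hc : ∀ f : ℝ → X, ContinuousOn f (Icc (0 : ℝ) t₀) →
      ∃ x : X, IsRiemannIntegral (fun t : ℝ => Tb (t₀ - t) (B (f t))) 0 t₀ (e x))
    -- condition (d): `p(∫₀^{t₀} T̄(t₀ - t) B f(t) dt) ≤ K · sup_{t ∈ [0,t₀]} p(f t)`
    (hd : ∀ i : ι, ∃ K : ℝ, K ∈ Ioo (0 : ℝ) 1 ∧
      ∀ f : ℝ → X, ContinuousOn f (Icc (0 : ℝ) t₀) → ∀ x : X,
        IsRiemannIntegral (fun t : ℝ => Tb (t₀ - t) (B (f t))) 0 t₀ (e x) →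
          Γ i x ≤ K * ⨆ t ∈ Icc (0 : ℝ) t₀, Γ i (f t))
    -- the perturbed operator `C = (Ā + B)|_X`
    (domC : Set X) (hdomC : domC = {x : X | ∃ y : X, e y = Ab (e x) + B x})
    (C : X → X) (hC : ∀ x ∈ domC, e (C x) = Ab (e x) + B x)
    (hdense : Dense domC) :
    ∀ f f' : ℝ → X, MemDD t₀ f f' → ∀ ε : ℝ, 0 < ε → ∀ s : Finset ι,
      ∃ g g' : ℝ → X, MemDD t₀ g g' ∧ MemDA t₀ domC C g ∧
        ∀ i ∈ s, (⨆ t ∈ Icc (0 : ℝ) t₀, Γ i (f t - g t)) +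
          (⨆ t ∈ Icc (0 : ℝ) t₀, Γ i (f' t - g' t)) < ε := by
  intro f f' hff' ε hε s
  obtain ⟨⟨hfc, hf0⟩, hfd, hf'c, hf'0⟩ := hff'
  -- the seminorm `q = ∑ i ∈ s, Γ i`
  set q : Seminorm ℝ X := ∑ i ∈ s, Γ i with hqdef
  have hqapp : ∀ x : X, q x = ∑ i ∈ s, Γ i x := fun x => DSAux.seminorm_sum_apply Γ s x
  have hqcont : Continuous fun x => q x := by
    have heq : (fun x => q x) = fun x => ∑ i ∈ s, Γ i x := funext hqapp
    rw [heq]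
    exact continuous_finset_sum _ (fun i _ => hΓ.continuous_seminorm i)
  have hΓq : ∀ i ∈ s, ∀ x : X, Γ i x ≤ q x := by
    intro i hi x
    rw [hqapp]
    exact Finset.single_le_sum (fun j _ => apply_nonneg (Γ j) x) hi
  -- `η`
  set η := ε / (2 * (t₀ + 1)) with hηdef
  have hη : 0 < η := div_pos hε (by linarith)
  -- linearity of `Ab` on the range of `e`
  have key : ∀ x : X, Tendsto (fun t : ℝ => t⁻¹ • (Tb t (e x) - e x)) (𝓝[>] 0)
      (𝓝 (Ab (e x))) := fun x => hAb.2 (e x) ⟨x, rfl⟩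
  have hAb0 : Ab (0 : Xb) = 0 := by
    have h1 : Tendsto (fun t : ℝ => t⁻¹ • (Tb t (e 0) - e 0)) (𝓝[>] 0) (𝓝 (Ab (e 0))) := key 0
    rw [map_zero e] at h1
    have h2 : Tendsto (fun t : ℝ => t⁻¹ • (Tb t (0:Xb) - 0)) (𝓝[>] 0) (𝓝 (0:Xb)) := by
      have heq : (fun t : ℝ => t⁻¹ • (Tb t (0:Xb) - 0)) = fun _ => (0:Xb) := by
        funext t; simp
      rw [heq]; exact tendsto_const_nhds
    exact tendsto_nhds_unique h1 h2
  have hAbadd : ∀ x z : X, Ab (e (x + z)) = Ab (e x) + Ab (e z) := by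
    intro x z
    have h1 := key (x + z)
    have h2 := (key x).add (key z)
    have heq : (fun t : ℝ => t⁻¹ • (Tb t (e (x + z)) - e (x + z)))
        = fun t : ℝ => t⁻¹ • (Tb t (e x) - e x) + t⁻¹ • (Tb t (e z) - e z) := by
      funext t
      rw [map_add e, map_add (Tb t), ← smul_add]
      congr 1
      abel
    rw [heq] at h1
    exact tendsto_nhds_unique h1 h2
  have hAbsmul : ∀ (a : ℝ) (x : X), Ab (e (a • x)) = a • Ab (e x) := by
    intro a x
    have h1 := key (a • x)
    have h2 := (key x).const_smul a
    have heq : (fun t : ℝ => t⁻¹ • (Tb t (e (a • x)) - e (a • x)))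
        = fun t : ℝ => a • (t⁻¹ • (Tb t (e x) - e x)) := by
      funext t
      rw [map_smul e, map_smul (Tb t), smul_comm]
      congr 1
      rw [smul_sub]
    rw [heq] at h1
    exact tendsto_nhds_unique h1 h2
  -- `domC` is a subspace and `C` is linear on it
  have hCzero : (0:X) ∈ domC ∧ C 0 = 0 := by
    have hmem : (0:X) ∈ domC := by
      rw [hdomC]
      exact ⟨0, by simp [hAb0]⟩
    refine ⟨hmem, he ?_⟩
    rw [hC 0 hmem]
    simp [hAb0]
  have hCadd : ∀ x ∈ domC, ∀ z ∈ domC, x + z ∈ domC ∧ C (x + z) = C x + C z := by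
    intro x hx z hz
    have hx' := hx; rw [hdomC] at hx'; obtain ⟨w1, hw1⟩ := hx'
    have hz' := hz; rw [hdomC] at hz'; obtain ⟨w2, hw2⟩ := hz'
    have hmem : x + z ∈ domC := by
      rw [hdomC]
      refine ⟨w1 + w2, ?_⟩
      rw [map_add e, hw1, hw2, hAbadd x z, map_add B]
      abel
    refine ⟨hmem, he ?_⟩
    rw [hC _ hmem, hAbadd x z, map_add B, map_add e, hC x hx, hC z hz]
    abel
  have hCsmul : ∀ (a : ℝ), ∀ x ∈ domC, a • x ∈ domC ∧ C (a • x) = a • C x := by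
    intro a x hx
    have hx' := hx; rw [hdomC] at hx'; obtain ⟨w1, hw1⟩ := hx'
    have hmem : a • x ∈ domC := by
      rw [hdomC]
      refine ⟨a • w1, ?_⟩
      rw [map_smul e, hw1, hAbsmul a x, map_smul B, smul_add]
    refine ⟨hmem, he ?_⟩
    rw [hC _ hmem, hAbsmul a x, map_smul B, map_smul e, hC x hx, smul_add]
  have hCsum : ∀ (m : ℕ) (c : ℕ → ℝ) (v : ℕ → X), (∀ k, v k ∈ domC) →
      (∑ k ∈ Finset.range m, c k • v k) ∈ domC ∧
      C (∑ k ∈ Finset.range m, c k • v k) = ∑ k ∈ Finset.range m, c k • C (v k) := by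
    intro m c v hv
    induction m with
    | zero => simpa using hCzero
    | succ m ih =>
      rw [Finset.sum_range_succ, Finset.sum_range_succ]
      have hsm := hCsmul (c m) (v m) (hv m)
      have hadd := hCadd _ ih.1 _ hsm.1
      exact ⟨hadd.1, by rw [hadd.2, ih.2, hsm.2]⟩
  -- approximation from `domC`
  have happrox : ∀ x : X, ∃ z, z ∈ domC ∧ q (x - z) < η/4 := by
    intro x
    have hopen : IsOpen {z : X | q (x - z) < η/4} := by
      have heq : {z : X | q (x - z) < η/4} = (fun z : X => q (x - z)) ⁻¹' Iio (η/4) := rfl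
      rw [heq]
      exact (hqcont.comp (continuous_const.sub continuous_id)).isOpen_preimage _ isOpen_Iio
    have hne : {z : X | q (x - z) < η/4}.Nonempty := ⟨x, by simp; linarith⟩
    obtain ⟨z, hz1, hz2⟩ := hdense.inter_open_nonempty _ hopen hne
    exact ⟨z, hz2, hz1⟩
  -- uniform continuity of `f'` with respect to `q`
  have hunif : ∃ δ₀ > 0, ∀ a ∈ Icc (0:ℝ) t₀, ∀ b ∈ Icc (0:ℝ) t₀, |a - b| < δ₀ →
      q (f' a - f' b) < η/4 := by
    set F : ℝ × ℝ → ℝ := fun z => q (f' z.1 - f' z.2) with hF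
    have hFcont : ContinuousOn F (Icc (0:ℝ) t₀ ×ˢ Icc (0:ℝ) t₀) := by
      apply hqcont.comp_continuousOn
      apply ContinuousOn.sub
      · exact hf'c.comp continuous_fst.continuousOn (fun z hz => hz.1)
      · exact hf'c.comp continuous_snd.continuousOn (fun z hz => hz.2)
    set K := (Icc (0:ℝ) t₀ ×ˢ Icc (0:ℝ) t₀) ∩ F ⁻¹' (Ici (η/4)) with hK
    have hKclosed : IsClosed K := hFcont.preimage_isClosed_of_isClosed
      (isClosed_Icc.prod isClosed_Icc) isClosed_Ici
    have hKcompact : IsCompact K :=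
      (isCompact_Icc.prod isCompact_Icc).of_isClosed_subset hKclosed inter_subset_left
    rcases eq_empty_or_nonempty K with hKe | hKne
    · refine ⟨1, one_pos, fun a ha b hb hab => ?_⟩
      by_contra hcon
      have hm : (a, b) ∈ K := ⟨⟨ha, hb⟩, not_lt.mp hcon⟩
      rw [hKe] at hm; exact hm
    · obtain ⟨z₀, hz₀K, hz₀min⟩ := hKcompact.exists_isMinOn hKne
        ((continuous_fst.sub continuous_snd).abs.continuousOn)
      have hδ₀pos : 0 < |z₀.1 - z₀.2| := by
        rcases eq_or_lt_of_le (abs_nonneg (z₀.1 - z₀.2)) with hz | hz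
        · exfalso
          have h0 : z₀.1 - z₀.2 = 0 := abs_eq_zero.mp hz.symm
          have h2 : η/4 ≤ q (f' z₀.1 - f' z₀.2) := hz₀K.2
          rw [sub_eq_zero] at h0
          rw [h0, sub_self, map_zero] at h2
          linarith
        · exact hz
      refine ⟨|z₀.1 - z₀.2|, hδ₀pos, fun a ha b hb hab => ?_⟩
      by_contra hcon
      have hmemK : (a, b) ∈ K := ⟨⟨ha, hb⟩, not_lt.mp hcon⟩
      have := hz₀min hmemK
      simp only at this
      exact absurd hab (not_lt.mpr this)
  obtain ⟨δ₀, hδ₀pos, hδ₀⟩ := hunif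
  -- the mesh
  obtain ⟨n₀, hn₀⟩ := exists_nat_gt (t₀ / δ₀)
  set n := n₀ + 1 with hn
  have hnpos : 0 < (n:ℝ) := by positivity
  have hngt : t₀ / δ₀ < (n:ℝ) := lt_of_lt_of_le hn₀ (by exact_mod_cast Nat.le_succ n₀)
  set δ := t₀ / n with hδdef
  have hδpos : 0 < δ := div_pos ht₀ hnpos
  have hδlt : δ < δ₀ := by
    rw [hδdef, div_lt_iff₀ hnpos]
    have := (div_lt_iff₀ hδ₀pos).mp hngt
    linarith
  have hnδ : (n:ℝ) * δ = t₀ := by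
    rw [hδdef]; field_simp
  -- choice of approximating vectors
  have hchoice : ∀ k : ℕ, ∃ z, z ∈ domC ∧ q (f' ((k:ℝ) * δ) - z) < η/4 :=
    fun k => happrox (f' ((k:ℝ) * δ))
  set y : ℕ → X := fun k => if k = 0 then 0 else (hchoice k).choose with hy
  have hy0 : y 0 = 0 := by simp [hy]
  have hydom : ∀ k, y k ∈ domC := by
    intro k
    by_cases hk : k = 0
    · rw [hy]; simp only [hk, if_pos rfl]; exact hCzero.1
    · rw [hy]; simp only [if_neg hk]; exact ((hchoice k).choose_spec).1
  have hyapprox : ∀ k : ℕ, q (f' ((k:ℝ) * δ) - y k) ≤ η/4 := by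
    intro k
    by_cases hk : k = 0
    · subst hk
      rw [hy0]
      simp only [Nat.cast_zero, zero_mul, hf'0, sub_zero, map_zero]
      linarith
    · rw [hy]; simp only [if_neg hk]
      exact le_of_lt ((hchoice k).choose_spec).2
  -- the hat functions and their primitives
  set ψ : ℕ → ℝ → ℝ := fun k t => DSAux.dsPhi (t/δ - k) with hψdef
  have hψ_eq : ∀ k t, ψ k t = DSAux.dsPhi (t/δ - k) := fun _ _ => rfl
  set Ψ : ℕ → ℝ → ℝ := fun k t => ∫ u in (0:ℝ)..t, ψ k u with hΨdef
  have hψcont : ∀ k, Continuous (ψ k) := fun k =>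
    DSAux.dsPhi_continuous.comp ((continuous_id.div_const δ).sub continuous_const)
  have hψnonneg : ∀ k t, 0 ≤ ψ k t := fun k t => DSAux.dsPhi_nonneg _
  have hΨder : ∀ k t, HasDerivAt (Ψ k) (ψ k t) t := by
    intro k t
    exact intervalIntegral.integral_hasDerivAt_right
      ((hψcont k).intervalIntegrable _ _)
      ((hψcont k).stronglyMeasurableAtFilter _ _)
      (hψcont k).continuousAt
  have hΨcont : ∀ k, Continuous (Ψ k) := by
    intro k
    rw [continuous_iff_continuousAt]
    exact fun t => (hΨder k t).continuousAt
  have hΨ0 : ∀ k, Ψ k 0 = 0 := fun k => intervalIntegral.integral_same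
  have hψsum : ∀ t ∈ Icc (0:ℝ) t₀, ∑ k ∈ Finset.range (n+1), ψ k t = 1 := by
    intro t ht
    have hx : t/δ ∈ Icc (0:ℝ) (n:ℝ) := by
      constructor
      · exact div_nonneg ht.1 hδpos.le
      · rw [div_le_iff₀ hδpos, hnδ]
        exact ht.2
    exact DSAux.dsPhi_sum n (Nat.succ_le_succ (Nat.zero_le _)) _ hx
  -- the approximating functions
  set h : ℝ → X := fun t => ∑ k ∈ Finset.range (n+1), ψ k t • y k with hhdef
  set g : ℝ → X := fun t => ∑ k ∈ Finset.range (n+1), Ψ k t • y k with hgdef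
  have hg0 : g 0 = 0 := by
    rw [hgdef]
    simp [hΨ0]
  have hh0 : h 0 = 0 := by
    rw [hhdef]
    apply Finset.sum_eq_zero
    intro k hk
    by_cases hk0 : k = 0
    · rw [hk0, hy0, smul_zero]
    · have hz : ψ k 0 = 0 := by
        rw [hψ_eq]
        apply DSAux.dsPhi_eq_zero
        rw [zero_div, zero_sub, abs_neg, Nat.abs_cast]
        exact_mod_cast Nat.one_le_iff_ne_zero.mpr hk0
      rw [hz, zero_smul]
  have hgcont : Continuous g :=
    continuous_finset_sum _ (fun k _ => (hΨcont k).smul continuous_const)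
  have hhcont : Continuous h :=
    continuous_finset_sum _ (fun k _ => (hψcont k).smul continuous_const)
  have hgder : ∀ t : ℝ, HasDerivWithinAtLC g (h t) (Icc (0:ℝ) t₀) t := by
    intro t
    exact DSAux.hasDerivWithinAtLC_sum_smul (Finset.range (n+1)) Ψ (fun k => ψ k t) y t _
      (fun k _ => hΨder k t)
  -- `g` takes values in `domC` and `C ∘ g` is explicit
  have hgC : ∀ t : ℝ, g t ∈ domC ∧
      C (g t) = ∑ k ∈ Finset.range (n+1), Ψ k t • C (y k) :=
    fun t => hCsum (n+1) (fun k => Ψ k t) y hydom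
  have hCgcont : ContinuousOn (fun t => C (g t)) (Icc (0:ℝ) t₀) := by
    have heq : (fun t => C (g t)) = fun t => ∑ k ∈ Finset.range (n+1), Ψ k t • C (y k) :=
      funext fun t => (hgC t).2
    rw [heq]
    exact (continuous_finset_sum _ (fun k _ => (hΨcont k).smul continuous_const)).continuousOn
  -- the key pointwise estimate
  have hkey : ∀ t ∈ Icc (0:ℝ) t₀, q (f' t - h t) ≤ η/2 := by
    intro t ht
    have hrepr : f' t - h t = ∑ k ∈ Finset.range (n+1), ψ k t • (f' t - y k) := by
      have h1 : f' t = ∑ k ∈ Finset.range (n+1), ψ k t • f' t := by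
        rw [← Finset.sum_smul, hψsum t ht, one_smul]
      calc f' t - h t
          = (∑ k ∈ Finset.range (n+1), ψ k t • f' t)
            - ∑ k ∈ Finset.range (n+1), ψ k t • y k := by rw [← h1]
        _ = ∑ k ∈ Finset.range (n+1), (ψ k t • f' t - ψ k t • y k) :=
            (Finset.sum_sub_distrib _ _).symm
        _ = ∑ k ∈ Finset.range (n+1), ψ k t • (f' t - y k) := by
            apply Finset.sum_congr rfl
            intro k _
            rw [smul_sub]
    rw [hrepr]
    refine le_trans (DSAux.seminorm_map_sum_le q _ _) ?_
    have hterm : ∀ k ∈ Finset.range (n+1), q (ψ k t • (f' t - y k)) ≤ ψ k t * (η/2) := by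
      intro k hk
      rw [map_smul_eq_mul, Real.norm_eq_abs, abs_of_nonneg (hψnonneg k t)]
      rcases eq_or_lt_of_le (hψnonneg k t) with hz | hpos
      · rw [← hz, zero_mul, zero_mul]
      · have habs : |t/δ - k| < 1 := by
          apply DSAux.abs_lt_one_of_dsPhi_pos
          rw [← hψ_eq]
          exact hpos
        have hkn : k ≤ n := Nat.lt_succ_iff.mp (Finset.mem_range.mp hk)
        have hkδmem : (k:ℝ) * δ ∈ Icc (0:ℝ) t₀ := by
          constructor
          · positivity
          · rw [← hnδ]
            apply mul_le_mul_of_nonneg_right _ hδpos.le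
            exact_mod_cast hkn
        have hdist : |t - (k:ℝ)*δ| < δ₀ := by
          have heq : t - (k:ℝ)*δ = δ * (t/δ - k) := by
            rw [mul_sub, mul_div_cancel₀ t (ne_of_gt hδpos)]
            ring
          rw [heq, abs_mul, abs_of_pos hδpos]
          have h1 : δ * |t/δ - (k:ℝ)| < δ * 1 := (mul_lt_mul_iff_right₀ hδpos).mpr habs
          rw [mul_one] at h1
          linarith
        have h1 : q (f' t - f' ((k:ℝ)*δ)) < η/4 := hδ₀ t ht ((k:ℝ)*δ) hkδmem hdist
        have h2 : q (f' ((k:ℝ)*δ) - y k) ≤ η/4 := hyapprox k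
        have h3 : q (f' t - y k) ≤ η/2 := by
          have htri := map_add_le_add q (f' t - f' ((k:ℝ)*δ)) (f' ((k:ℝ)*δ) - y k)
          rw [sub_add_sub_cancel] at htri
          linarith
        exact mul_le_mul_of_nonneg_left h3 (le_of_lt hpos)
    refine le_trans (Finset.sum_le_sum hterm) ?_
    rw [← Finset.sum_mul, hψsum t ht, one_mul]
  -- mean value estimate for `f - g`
  have huder : ∀ t ∈ Icc (0:ℝ) t₀,
      HasDerivWithinAtLC (fun r => f r - g r) (f' t - h t) (Icc (0:ℝ) t₀) t := by
    intro t ht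
    have h1 := hfd t ht
    have h2 := hgder t
    unfold HasDerivWithinAtLC at h1 h2 ⊢
    have h3 := h1.sub h2
    refine h3.congr (fun u => ?_)
    rw [← smul_sub]
    congr 1
    beta_reduce
    rw [sub_sub_sub_comm]
  have hM : ∀ t ∈ Icc (0:ℝ) t₀, q (f' t - h t) < η := fun t ht =>
    lt_of_le_of_lt (hkey t ht) (by linarith)
  have hmvt := DSAux.seminorm_mvt q hqcont (hfc.sub hgcont.continuousOn) huder hM
  have hfg : ∀ t ∈ Icc (0:ℝ) t₀, q (f t - g t) ≤ η * t₀ := by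
    intro t ht
    have hm := hmvt t ht
    rw [Pi.sub_apply, Pi.sub_apply, hf0, hg0, sub_zero, sub_zero] at hm
    have : η * t ≤ η * t₀ := mul_le_mul_of_nonneg_left ht.2 hη.le
    linarith
  -- conclusion
  refine ⟨g, h, ⟨⟨hgcont.continuousOn, hg0⟩, fun t ht => hgder t, hhcont.continuousOn, hh0⟩,
    ⟨⟨hgcont.continuousOn, hg0⟩, fun t _ => (hgC t).1, hCgcont⟩, ?_⟩
  intro i hi
  have hηt₀ : (0:ℝ) ≤ η * t₀ := le_of_lt (mul_pos hη ht₀)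
  have hS1 : (⨆ t ∈ Icc (0:ℝ) t₀, Γ i (f t - g t)) ≤ η * t₀ := by
    apply Real.iSup_le _ hηt₀
    intro t
    apply Real.iSup_le _ hηt₀
    intro ht
    exact le_trans (hΓq i hi _) (hfg t ht)
  have hS2 : (⨆ t ∈ Icc (0:ℝ) t₀, Γ i (f' t - h t)) ≤ η/2 := by
    apply Real.iSup_le _ (by linarith)
    intro t
    apply Real.iSup_le _ (by linarith)
    intro ht
    exact le_trans (hΓq i hi _) (hkey t ht)
  have hηval : η * t₀ + η/2 < ε := by
    have hval : η * (2*(t₀+1)) = ε := by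
      rw [hηdef]; field_simp
    nlinarith [mul_pos hη ht₀]
  linarith
end
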